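/- arXiv:1501.07544 — 6 statements merged into one kernel-verified Lean document; each statement's English description precedes it below -/
import Mathlib

section
/- Let B ⊆ ℝ^n be an m-dimensional subspace and X ⊆ [n] with dim(S_{X^c} ∩ B) = 0. Define I = {I ⊆ X : dim(S_{I ∪ X^c} ∩ B) = 0}. Then (X, I) is a matroid. -/
set_option maxHeartbeats 1000000

open Finset MeasureTheory

/-- The sparse subspace `S_J ⊆ ℝ^n`: vectors vanishing outside `J`. -/
def sparseSubspace (n : ℕ) (J : Finset (Fin n)) : Submodule ℝ (Fin n → ℝ) where
  carrier := {v | ∀ i, i ∉ J → v i = 0}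
  add_mem' := by intro a b ha hb i hi; simp [ha i hi, hb i hi]
  zero_mem' := by intro i _; rfl
  smul_mem' := by intro c v hv i hi; simp [hv i hi]

/-- Independence predicate of the matroid `M = (X, {I ⊆ X : dim(S_{I ∪ Xᶜ} ∩ B) = 0})`. -/
def matroidIndep {n : ℕ} (B : Submodule ℝ (Fin n → ℝ)) (X I : Finset (Fin n)) : Prop :=
  I ⊆ X ∧ Module.finrank ℝ ↥(sparseSubspace n (I ∪ Xᶜ) ⊓ B) = 0

lemma sparseSubspace_mono {n : ℕ} {J K : Finset (Fin n)} (h : J ⊆ K) :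
    sparseSubspace n J ≤ sparseSubspace n K := by
  intro x hx i hi
  exact hx i (fun hiJ => hi (h hiJ))

/-- standard basis vector -/
def stdE (n : ℕ) (i : Fin n) : Fin n → ℝ := Pi.single i 1

lemma stdE_apply {n : ℕ} (i j : Fin n) : stdE n i j = if j = i then 1 else 0 := by
  simp [stdE, Pi.single_apply]

lemma stdE_mem_sparse {n : ℕ} {K : Finset (Fin n)} {i : Fin n} (hi : i ∈ K) :
    stdE n i ∈ sparseSubspace n K := by
  intro j hj
  rw [stdE_apply, if_neg (fun h => hj (by rw [h]; exact hi))]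

lemma eq_sum_single {n : ℕ} {K : Finset (Fin n)} {u : Fin n → ℝ}
    (hu : u ∈ sparseSubspace n K) :
    u = ∑ i ∈ K, u i • stdE n i := by
  funext j
  rw [Finset.sum_apply]
  by_cases hj : j ∈ K
  · rw [Finset.sum_eq_single j]
    · rw [Pi.smul_apply, stdE_apply, if_pos rfl, smul_eq_mul, mul_one]
    · intro b _ hb
      rw [Pi.smul_apply, stdE_apply, if_neg (Ne.symm hb), smul_eq_mul, mul_zero]
    · intro h; exact absurd hj h
  · rw [hu j hj, Finset.sum_eq_zero]
    intro b hb
    have hne : j ≠ b := fun h => hj (h ▸ hb)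
    rw [Pi.smul_apply, stdE_apply, if_neg hne, smul_eq_mul, mul_zero]

theorem stmt2 {n m : ℕ} (B : Submodule ℝ (Fin n → ℝ)) (hB : Module.finrank ℝ B = m)
    (X : Finset (Fin n))
    (hX : Module.finrank ℝ ↥(sparseSubspace n Xᶜ ⊓ B) = 0) :
    matroidIndep B X ∅ ∧
    (∀ I J : Finset (Fin n), I ⊆ J → matroidIndep B X J → matroidIndep B X I) ∧
    (∀ I J : Finset (Fin n), matroidIndep B X I → matroidIndep B X J → I.card < J.card →
      ∃ b ∈ J \ I, matroidIndep B X (insert b I)) := by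
  classical
  rw [Submodule.finrank_eq_zero] at hX
  have indep_iff : ∀ I : Finset (Fin n),
      matroidIndep B X I ↔ I ⊆ X ∧ sparseSubspace n (I ∪ Xᶜ) ⊓ B = ⊥ := by
    intro I
    unfold matroidIndep
    rw [Submodule.finrank_eq_zero]
  set W : Submodule ℝ (Fin n → ℝ) := B ⊔ sparseSubspace n Xᶜ with hW
  set v : Fin n → (Fin n → ℝ) ⧸ W := fun i => W.mkQ (stdE n i) with hv
  have hvX : ∀ i ∈ Xᶜ, v i = 0 := by
    intro i hi
    show W.mkQ (stdE n i) = 0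
    rw [Submodule.mkQ_apply, Submodule.Quotient.mk_eq_zero]
    exact Submodule.mem_sup_right (stdE_mem_sparse hi)
  have indep_li : ∀ I : Finset (Fin n), matroidIndep B X I →
      LinearIndependent ℝ (fun i : (I : Set (Fin n)) => v i) := by
    intro I hI
    rw [indep_iff] at hI
    obtain ⟨hIX, hbot⟩ := hI
    rw [linearIndependent_iff']
    intro s g hsum j hj
    set w : Fin n → ℝ := ∑ i ∈ s, g i • stdE n (i : Fin n) with hwdef
    have hwW : w ∈ W := by
      have hmk : W.mkQ w = 0 := by
        rw [hwdef, map_sum]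
        simpa [hv] using hsum
      rwa [Submodule.mkQ_apply, Submodule.Quotient.mk_eq_zero] at hmk
    rw [Submodule.mem_sup] at hwW
    obtain ⟨b, hb, s', hs', hbs⟩ := hwW
    have hwI : w ∈ sparseSubspace n I := by
      intro i hi
      rw [hwdef, Finset.sum_apply, Finset.sum_eq_zero]
      intro k _
      have hne : i ≠ (k : Fin n) := fun h => hi (h ▸ k.2)
      rw [Pi.smul_apply, stdE_apply, if_neg hne, smul_eq_mul, mul_zero]
    have hbmem : b ∈ sparseSubspace n (I ∪ Xᶜ) ⊓ B := by
      constructor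
      · intro i hi
        rw [Finset.mem_union, not_or] at hi
        have hbi : b i = w i - s' i := by rw [← hbs]; simp
        rw [hbi, hwI i hi.1, hs' i hi.2, sub_zero]
      · exact hb
    rw [hbot, Submodule.mem_bot] at hbmem
    have hws : w = s' := by rw [← hbs, hbmem, zero_add]
    have hwj : w (j : Fin n) = g j := by
      rw [hwdef, Finset.sum_apply, Finset.sum_eq_single j]
      · rw [Pi.smul_apply, stdE_apply, if_pos rfl, smul_eq_mul, mul_one]
      · intro k _ hkj
        have hne : (j : Fin n) ≠ (k : Fin n) := fun h => hkj (Subtype.ext h).symm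
        rw [Pi.smul_apply, stdE_apply, if_neg hne, smul_eq_mul, mul_zero]
      · intro h; exact absurd hj h
    have hjX : (j : Fin n) ∉ Xᶜ := by
      have : (j : Fin n) ∈ X := hIX j.2
      simp [this]
    rw [← hwj, hws]
    exact hs' _ hjX
  refine ⟨?_, ?_, ?_⟩
  · rw [indep_iff]
    refine ⟨Finset.empty_subset _, ?_⟩
    simpa using hX
  · intro I J hIJ hJ
    rw [indep_iff] at hJ ⊢
    refine ⟨(hIJ.trans hJ.1), ?_⟩
    refine le_antisymm ?_ bot_le
    rw [← hJ.2]
    exact inf_le_inf_right _ (sparseSubspace_mono (Finset.union_subset_union_left hIJ))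
  · intro I J hI hJ hcard
    by_contra hcon
    push_neg at hcon
    have hspan : ∀ b ∈ J, v b ∈ Submodule.span ℝ (v '' (I : Set (Fin n))) := by
      intro b hbJ
      by_cases hbI : b ∈ I
      · exact Submodule.subset_span ⟨b, hbI, rfl⟩
      have hbJI : b ∈ J \ I := Finset.mem_sdiff.mpr ⟨hbJ, hbI⟩
      have hni := hcon b hbJI
      rw [indep_iff] at hni
      have hsub : insert b I ⊆ X := Finset.insert_subset (hJ.1 hbJ) hI.1
      have hne : sparseSubspace n (insert b I ∪ Xᶜ) ⊓ B ≠ ⊥ := fun h => hni ⟨hsub, h⟩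
      obtain ⟨u, hu, hu0⟩ := Submodule.exists_mem_ne_zero_of_ne_bot hne
      obtain ⟨huS, huB⟩ := hu
      have hIbot : sparseSubspace n (I ∪ Xᶜ) ⊓ B = ⊥ := ((indep_iff I).mp hI).2
      have hub : u b ≠ 0 := by
        intro h
        apply hu0
        have hmem : u ∈ sparseSubspace n (I ∪ Xᶜ) ⊓ B := by
          refine ⟨?_, huB⟩
          intro i hi
          by_cases hib : i = b
          · rw [hib]; exact h
          · refine huS i ?_
            rw [Finset.mem_union, not_or] at hi ⊢
            exact ⟨fun hins => (Finset.mem_insert.mp hins).elim hib hi.1, hi.2⟩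
        rw [hIbot, Submodule.mem_bot] at hmem
        exact hmem
      have hudec := eq_sum_single huS
      have hmk0 : W.mkQ u = 0 := by
        rw [Submodule.mkQ_apply, Submodule.Quotient.mk_eq_zero]
        exact Submodule.mem_sup_left huB
      have hbX : b ∉ Xᶜ := by
        have : b ∈ X := hJ.1 hbJ
        simp [this]
      have hbIX : b ∉ I ∪ Xᶜ := by
        rw [Finset.mem_union, not_or]; exact ⟨hbI, hbX⟩
      have hdisj : Disjoint I Xᶜ := by
        rw [Finset.disjoint_left]
        intro a ha haX
        exact (Finset.mem_compl.mp haX) (hI.1 ha)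
      have h0 : u b • v b + ∑ i ∈ I, u i • v i = 0 := by
        have h1 := congrArg W.mkQ hudec
        rw [hmk0, map_sum] at h1
        simp only [_root_.map_smul] at h1
        rw [Finset.insert_union, Finset.sum_insert hbIX, Finset.sum_union hdisj] at h1
        have h2 : ∑ i ∈ Xᶜ, u i • W.mkQ (stdE n i) = 0 := by
          apply Finset.sum_eq_zero
          intro i hi
          rw [show W.mkQ (stdE n i) = v i from rfl, hvX i hi, smul_zero]
        rw [h2, add_zero] at h1
        exact h1.symm
      have hsum_mem : ∑ i ∈ I, u i • v i ∈ Submodule.span ℝ (v '' (I : Set (Fin n))) :=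
        Submodule.sum_mem _ (fun i hi => Submodule.smul_mem _ _
          (Submodule.subset_span ⟨i, hi, rfl⟩))
      have h1 : u b • v b = -(∑ i ∈ I, u i • v i) := eq_neg_of_add_eq_zero_left h0
      have h2 : v b = (u b)⁻¹ • (u b • v b) := (inv_smul_smul₀ hub _).symm
      rw [h2, h1]
      exact Submodule.smul_mem _ _ (Submodule.neg_mem _ hsum_mem)
    have hIli := indep_li I hI
    have hJli := indep_li J hJ
    have hJinj : Set.InjOn v (J : Set (Fin n)) := by
      intro a ha b hb hab
      exact congrArg Subtype.val (hJli.injective (a₁ := ⟨a, ha⟩) (a₂ := ⟨b, hb⟩) hab)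
    have hJset : LinearIndependent ℝ
        (fun x : v '' (J : Set (Fin n)) => (x : (Fin n → ℝ) ⧸ W)) :=
      (linearIndepOn_iff_image hJinj).mp hJli
    have hle : Submodule.span ℝ (v '' (J : Set (Fin n))) ≤
        Submodule.span ℝ (v '' (I : Set (Fin n))) := by
      rw [Submodule.span_le]
      rintro _ ⟨j, hj, rfl⟩
      exact hspan j hj
    have e1 : v '' (J : Set (Fin n)) = ↑(J.image v) := (Finset.coe_image).symm
    have e2 : v '' (I : Set (Fin n)) = ↑(I.image v) := (Finset.coe_image).symm
    have hcardJ : Module.finrank ℝ (Submodule.span ℝ (v '' (J : Set (Fin n)))) = J.card := by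
      rw [e1] at hJset ⊢
      rw [finrank_span_finset_eq_card hJset]
      exact Finset.card_image_of_injOn hJinj
    have hcardI : Module.finrank ℝ (Submodule.span ℝ (v '' (I : Set (Fin n)))) ≤ I.card := by
      rw [e2]
      exact le_trans (finrank_span_finset_le_card _) Finset.card_image_le
    have hmono := Submodule.finrank_mono hle
    omega
end

section
/- Let B ⊆ ℝ^n be a subspace and X ⊆ [n] with dim(S_{X^c} ∩ B) = 0. The rank function of the matroid M = (X, {I ⊆ X : dim(S_{I ∪ X^c} ∩ B) = 0}) is given by r(J) = |J| − dim(S_{J ∪ X^c} ∩ B) for all J ⊆ X. -/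
open Finset MeasureTheory

set_option synthInstance.maxHeartbeats 800000
set_option maxHeartbeats 1600000

noncomputable def gdim {n : ℕ} (B : Submodule ℝ (Fin n → ℝ)) (A : Finset (Fin n)) : ℕ :=
  Module.finrank ℝ ↥(sparseSubspace n A ⊓ B)

lemma sparse_mono {n : ℕ} {A A' : Finset (Fin n)} (h : A ⊆ A') :
    sparseSubspace n A ≤ sparseSubspace n A' :=
  fun v hv i hi => hv i (fun hiA => hi (h hiA))

lemma gdim_mono {n : ℕ} (B : Submodule ℝ (Fin n → ℝ)) {A A' : Finset (Fin n)}
    (h : A ⊆ A') : gdim B A ≤ gdim B A' :=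
  Submodule.finrank_mono (inf_le_inf_right B (sparse_mono h))

lemma gdim_erase {n : ℕ} (B : Submodule ℝ (Fin n → ℝ)) (A : Finset (Fin n)) (x : Fin n) :
    ∃ r ≤ 1, gdim B A = gdim B (A.erase x) + r ∧
      ((∃ v ∈ sparseSubspace n A ⊓ B, v x ≠ 0) → r = 1) := by
  classical
  set p := sparseSubspace n A ⊓ B with hp
  set φ : ↥p →ₗ[ℝ] ℝ := (LinearMap.proj x).comp p.subtype with hφ
  have hker : LinearMap.ker φ = (sparseSubspace n (A.erase x) ⊓ B).comap p.subtype := by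
    ext v
    simp only [LinearMap.mem_ker, Submodule.mem_comap, Submodule.mem_inf, hφ,
      LinearMap.comp_apply, Submodule.subtype_apply, LinearMap.proj_apply]
    constructor
    · intro hv
      refine ⟨fun i hi => ?_, v.2.2⟩
      by_cases hix : i = x
      · subst hix; exact hv
      · exact v.2.1 i (by intro hiA; exact hi (Finset.mem_erase.mpr ⟨hix, hiA⟩))
    · intro hv
      exact hv.1 x (by simp)
  have hle : sparseSubspace n (A.erase x) ⊓ B ≤ p :=
    inf_le_inf_right B (sparse_mono (Finset.erase_subset x A))
  have hkerdim : Module.finrank ℝ ↥(LinearMap.ker φ) = gdim B (A.erase x) := by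
    rw [hker]
    exact (Submodule.comapSubtypeEquivOfLe hle).finrank_eq
  have hrn := LinearMap.finrank_range_add_finrank_ker φ
  refine ⟨Module.finrank ℝ ↥(LinearMap.range φ), ?_, ?_, ?_⟩
  · calc Module.finrank ℝ ↥(LinearMap.range φ) ≤ Module.finrank ℝ ℝ :=
        Submodule.finrank_le _
      _ = 1 := Module.finrank_self ℝ
  · rw [gdim, ← hrn, hkerdim]; ring
  · rintro ⟨v, hv, hvx⟩
    have hne : LinearMap.range φ ≠ ⊥ := by
      intro hbot
      have : φ ⟨v, hv⟩ = 0 := by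
        have := LinearMap.mem_range_self φ ⟨v, hv⟩
        rw [hbot] at this; simpa using this
      exact hvx this
    have h1 : Module.finrank ℝ ↥(LinearMap.range φ) ≠ 0 :=
      fun h0 => hne (Submodule.finrank_eq_zero.mp h0)
    have h2 : Module.finrank ℝ ↥(LinearMap.range φ) ≤ 1 := by
      calc Module.finrank ℝ ↥(LinearMap.range φ) ≤ Module.finrank ℝ ℝ :=
          Submodule.finrank_le _
        _ = 1 := Module.finrank_self ℝ
    omega

lemma gdim_insert_le {n : ℕ} (B : Submodule ℝ (Fin n → ℝ)) (A : Finset (Fin n)) (x : Fin n) :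
    gdim B (insert x A) ≤ gdim B A + 1 := by
  obtain ⟨r, hr1, heq, -⟩ := gdim_erase B (insert x A) x
  have h := gdim_mono B (Finset.erase_insert_subset x A)
  omega

lemma gdim_union_le {n : ℕ} (B : Submodule ℝ (Fin n → ℝ)) (A C : Finset (Fin n)) :
    gdim B (A ∪ C) ≤ gdim B A + C.card := by
  classical
  induction C using Finset.induction_on with
  | empty => simp
  | @insert c C hc ih =>
    rw [Finset.union_insert, Finset.card_insert_of_notMem hc]
    calc gdim B (insert c (A ∪ C)) ≤ gdim B (A ∪ C) + 1 := gdim_insert_le B _ c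
      _ ≤ gdim B A + C.card + 1 := by omega

lemma exists_indep {n : ℕ} (B : Submodule ℝ (Fin n → ℝ)) (X : Finset (Fin n))
    (hX : Module.finrank ℝ ↥(sparseSubspace n Xᶜ ⊓ B) = 0) :
    ∀ m (J : Finset (Fin n)), J.card = m → J ⊆ X →
      ∃ I ⊆ J, matroidIndep B X I ∧ I.card = J.card - gdim B (J ∪ Xᶜ) := by
  classical
  intro m
  induction m using Nat.strong_induction_on with
  | _ m ih =>
    intro J hcard hJX
    by_cases h0 : gdim B (J ∪ Xᶜ) = 0
    · exact ⟨J, Finset.Subset.refl J, ⟨hJX, h0⟩, by omega⟩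
    · -- there is a nonzero vector in the intersection
      have hbot : sparseSubspace n (J ∪ Xᶜ) ⊓ B ≠ ⊥ := by
        intro hb
        exact h0 (by rw [gdim, hb]; exact finrank_bot ℝ _)
      obtain ⟨v, hv, hvne⟩ := Submodule.exists_mem_ne_zero_of_ne_bot hbot
      have hXbot : sparseSubspace n Xᶜ ⊓ B = ⊥ := Submodule.finrank_eq_zero.mp hX
      have hvnX : v ∉ sparseSubspace n Xᶜ := by
        intro hmem
        have : v ∈ sparseSubspace n Xᶜ ⊓ B := ⟨hmem, hv.2⟩
        rw [hXbot] at this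
        exact hvne (by simpa using this)
      obtain ⟨x, hx⟩ : ∃ x, ¬(x ∉ Xᶜ → v x = 0) := by
        by_contra hall
        push_neg at hall
        exact hvnX (fun i hi => hall i (by tauto))
      push_neg at hx
      obtain ⟨hxX, hvx⟩ := hx
      have hxJ : x ∈ J := by
        by_contra hxJ
        exact hvx (hv.1 x (by simp only [Finset.mem_union]; tauto))
      -- erase x
      obtain ⟨r, hr1, heq, hr⟩ := gdim_erase B (J ∪ Xᶜ) x
      have hr1' : r = 1 := hr ⟨v, hv, hvx⟩
      have herase : (J ∪ Xᶜ).erase x = (J.erase x) ∪ Xᶜ := by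
        ext i
        simp only [Finset.mem_erase, Finset.mem_union]
        constructor
        · rintro ⟨hix, hiJ | hiX⟩
          · exact Or.inl ⟨hix, hiJ⟩
          · exact Or.inr hiX
        · rintro (⟨hix, hiJ⟩ | hiX)
          · exact ⟨hix, Or.inl hiJ⟩
          · refine ⟨fun h => ?_, Or.inr hiX⟩
            subst h; exact hxX hiX
      rw [herase, hr1'] at heq
      have hxcard : (J.erase x).card = J.card - 1 := Finset.card_erase_of_mem hxJ
      have hcardpos : 0 < J.card := Finset.card_pos.mpr ⟨x, hxJ⟩
      obtain ⟨I, hIJ, hInd, hIcard⟩ := ih (m - 1) (by omega) (J.erase x) (by omega)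
        ((Finset.erase_subset x J).trans hJX)
      refine ⟨I, hIJ.trans (Finset.erase_subset x J), hInd, ?_⟩
      omega

theorem stmt3 {n : ℕ} (B : Submodule ℝ (Fin n → ℝ)) (X : Finset (Fin n))
    (hX : Module.finrank ℝ ↥(sparseSubspace n Xᶜ ⊓ B) = 0)
    (J : Finset (Fin n)) (hJ : J ⊆ X) :
    IsGreatest {k : ℕ | ∃ I ⊆ J, matroidIndep B X I ∧ I.card = k}
      (J.card - Module.finrank ℝ ↥(sparseSubspace n (J ∪ Xᶜ) ⊓ B)) := by
  classical
  constructor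
  · obtain ⟨I, hIJ, hInd, hIcard⟩ := exists_indep B X hX J.card J rfl hJ
    exact ⟨I, hIJ, hInd, hIcard⟩
  · rintro k ⟨I, hIJ, ⟨hIX, hI0⟩, hk⟩
    have hunion : J ∪ Xᶜ = (I ∪ Xᶜ) ∪ (J \ I) := by
      ext i
      simp only [Finset.mem_union, Finset.mem_sdiff]
      constructor
      · rintro (hiJ | hiX)
        · by_cases hiI : i ∈ I
          · exact Or.inl (Or.inl hiI)
          · exact Or.inr ⟨hiJ, hiI⟩
        · exact Or.inl (Or.inr hiX)
      · rintro ((hiI | hiX) | ⟨hiJ, -⟩)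
        · exact Or.inl (hIJ hiI)
        · exact Or.inr hiX
        · exact Or.inl hiJ
    have hle : gdim B (J ∪ Xᶜ) ≤ gdim B (I ∪ Xᶜ) + (J \ I).card := by
      rw [hunion]; exact gdim_union_le B _ _
    have hI0' : gdim B (I ∪ Xᶜ) = 0 := hI0
    have hsd : (J \ I).card = J.card - I.card := Finset.card_sdiff_of_subset hIJ
    have hcardle : I.card ≤ J.card := Finset.card_le_card hIJ
    have : gdim B (J ∪ Xᶜ) ≤ J.card - I.card := by omega
    show k ≤ J.card - gdim B (J ∪ Xᶜ)
    omega
end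

section
/- Let B ⊆ ℝ^n be a subspace. For any I ⊆ J ⊆ [n] and any X ⊆ [n] with dim(S_{I ∪ X^c} ∩ B) = 0, it holds that |I| ≤ |J| − dim(S_{J ∪ X^c} ∩ B). -/
open Finset MeasureTheory

theorem stmt4 {n : ℕ} (B : Submodule ℝ (Fin n → ℝ)) (I J X : Finset (Fin n))
    (hIJ : I ⊆ J)
    (h : Module.finrank ℝ ↥(sparseSubspace n (I ∪ Xᶜ) ⊓ B) = 0) :
    (I.card : ℤ) ≤
      (J.card : ℤ) - Module.finrank ℝ ↥(sparseSubspace n (J ∪ Xᶜ) ⊓ B) := by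
  -- The intersection with I ∪ Xᶜ is trivial
  have hbot : sparseSubspace n (I ∪ Xᶜ) ⊓ B = ⊥ :=
    Submodule.finrank_eq_zero.mp h
  set W := sparseSubspace n (J ∪ Xᶜ) ⊓ B with hW
  -- linear map from W to functions on J \ I
  let f : W →ₗ[ℝ] ((J \ I : Finset (Fin n)) → ℝ) :=
    { toFun := fun v i => v.1 i
      map_add' := fun a b => rfl
      map_smul' := fun c v => rfl }
  have hinj : Function.Injective f := by
    rw [← LinearMap.ker_eq_bot, LinearMap.ker_eq_bot']
    intro v hv
    have hzero : ∀ i ∈ J \ I, v.1 i = 0 := by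
      intro i hi
      exact congrFun hv ⟨i, hi⟩
    have hmem : v.1 ∈ sparseSubspace n (I ∪ Xᶜ) ⊓ B := by
      refine ⟨?_, v.2.2⟩
      intro i hi
      simp only [Finset.mem_union, Finset.mem_compl, not_or, not_not] at hi
      by_cases hiJ : i ∈ J
      · exact hzero i (Finset.mem_sdiff.mpr ⟨hiJ, hi.1⟩)
      · exact v.2.1 i (by simp [Finset.mem_union, Finset.mem_compl, hiJ, hi.2])
    rw [hbot] at hmem
    exact Subtype.ext hmem
  have hle : Module.finrank ℝ W ≤ (J \ I).card := by
    have := LinearMap.finrank_le_finrank_of_injective hinj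
    rw [show ((J \ I).card) = Fintype.card (J \ I : Finset (Fin n)) from (Fintype.card_coe _).symm]; simpa [Module.finrank_pi] using this
  have hcard : (J \ I).card = J.card - I.card := Finset.card_sdiff_of_subset hIJ
  have hIle : I.card ≤ J.card := Finset.card_le_card hIJ
  omega
end

section
/- Let B ⊆ ℝ^n be a subspace, X ⊆ [n] with dim(S_{X^c} ∩ B) = 0, and J ⊆ X. Then there exists K ⊆ J with |K| = |J| − dim(S_{J ∪ X^c} ∩ B) and dim(S_{K ∪ X^c} ∩ B) = 0. -/
open Finset MeasureTheory

lemma sparse_mem {n : ℕ} {J : Finset (Fin n)} {v : Fin n → ℝ} :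
    v ∈ sparseSubspace n J ↔ ∀ i, i ∉ J → v i = 0 := Iff.rfl

lemma stmt5_aux {n : ℕ} (B : Submodule ℝ (Fin n → ℝ)) (X : Finset (Fin n))
    (hX : Module.finrank ℝ ↥(sparseSubspace n Xᶜ ⊓ B) = 0) :
    ∀ m (J : Finset (Fin n)), J.card = m → J ⊆ X →
    ∃ K ⊆ J, K.card = J.card - Module.finrank ℝ ↥(sparseSubspace n (J ∪ Xᶜ) ⊓ B) ∧
      Module.finrank ℝ ↥(sparseSubspace n (K ∪ Xᶜ) ⊓ B) = 0 := by
  intro m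
  induction m with
  | zero =>
    intro J hc _
    have hJ : J = ∅ := Finset.card_eq_zero.mp hc
    subst hJ
    exact ⟨∅, le_refl _, by simp, by simpa using hX⟩
  | succ m ih =>
    intro J hc hJX
    set W := sparseSubspace n (J ∪ Xᶜ) ⊓ B with hW
    by_cases hd : Module.finrank ℝ ↥W = 0
    · exact ⟨J, le_refl _, by simp [hd], by rwa [← hW]⟩
    -- find a nonzero vector in W
    have hbot : sparseSubspace n Xᶜ ⊓ B = ⊥ := Submodule.finrank_eq_zero.mp hX
    have hWne : W ≠ ⊥ := by
      intro h
      apply hd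
      rw [show W = ⊥ from h]
      exact finrank_bot ℝ _
    obtain ⟨v, hvW, hv0⟩ := Submodule.exists_mem_ne_zero_of_ne_bot hWne
    -- find j ∈ J with v j ≠ 0
    have hvB : v ∈ B := hvW.2
    have hvnotX : v ∉ sparseSubspace n Xᶜ := by
      intro h
      exact hv0 (by simpa [hbot] using Submodule.mem_inf.mpr ⟨h, hvB⟩)
    have : ∃ j, j ∉ Xᶜ ∧ v j ≠ 0 := by
      by_contra h
      push_neg at h
      exact hvnotX fun i hi => by
        by_contra hne; exact hne (h i hi)
    obtain ⟨j, hjX, hvj⟩ := this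
    have hjJ : j ∈ J := by
      by_contra hj
      exact hvj (hvW.1 j (by simp only [Finset.mem_union]; tauto))
    -- evaluation map at j on W
    set ψ : W →ₗ[ℝ] ℝ := (LinearMap.proj j).comp W.subtype with hψ
    have hψv : ψ ⟨v, hvW⟩ = v j := rfl
    have hrange : LinearMap.range ψ = ⊤ := by
      rcases eq_bot_or_eq_top (LinearMap.range ψ) with h | h
      · exfalso
        have : ψ ⟨v, hvW⟩ ∈ LinearMap.range ψ := ⟨_, rfl⟩
        rw [h] at this
        exact hvj (by simpa [hψv] using this)
      · exact h
    have hker : Module.finrank ℝ ↥(LinearMap.ker ψ) = Module.finrank ℝ ↥W - 1 := by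
      have h1 := LinearMap.finrank_range_add_finrank_ker ψ
      rw [hrange] at h1
      have h2 : Module.finrank ℝ ↥(⊤ : Submodule ℝ ℝ) = 1 := by simp
      omega
    -- the erased set
    set J' := J.erase j with hJ'
    have hsub : J' ∪ Xᶜ ⊆ J ∪ Xᶜ :=
      Finset.union_subset_union_left (Finset.erase_subset _ _)
    have hjnot : j ∉ J' ∪ Xᶜ := by
      simp only [Finset.mem_union, hJ', Finset.mem_erase]
      tauto
    have hset : sparseSubspace n (J' ∪ Xᶜ) ⊓ B =
        Submodule.map W.subtype (LinearMap.ker ψ) := by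
      ext x
      simp only [Submodule.mem_map, LinearMap.mem_ker, Submodule.mem_inf]
      constructor
      · rintro ⟨hx1, hx2⟩
        have hxW : x ∈ W := by
          exact Submodule.mem_inf.mpr ⟨fun i hi => hx1 i (fun h => hi (hsub h)), hx2⟩
        refine ⟨⟨x, hxW⟩, ?_, rfl⟩
        have : x j = 0 := hx1 j hjnot
        simpa [hψ] using this
      · rintro ⟨⟨w, hw⟩, hk, rfl⟩
        have hwj : w j = 0 := by simpa [hψ] using hk
        refine ⟨fun i hi => ?_, hw.2⟩
        by_cases hij : i = j
        · subst hij; exact hwj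
        · refine hw.1 i (fun h => hi ?_)
          rcases Finset.mem_union.mp h with h1 | h1
          · exact Finset.mem_union_left _ (Finset.mem_erase.mpr ⟨hij, h1⟩)
          · exact Finset.mem_union_right _ h1
    have hfr : Module.finrank ℝ ↥(sparseSubspace n (J' ∪ Xᶜ) ⊓ B) =
        Module.finrank ℝ ↥W - 1 := by
      rw [hset, Submodule.finrank_map_subtype_eq, hker]
    have hcard' : J'.card = m := by
      simp [hJ', Finset.card_erase_of_mem hjJ, hc]
    obtain ⟨K, hKJ', hKcard, hK0⟩ := ih J' hcard' (fun i hi => hJX (Finset.mem_of_mem_erase hi))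
    refine ⟨K, hKJ'.trans (Finset.erase_subset _ _), ?_, hK0⟩
    rw [hKcard, hfr]
    have hd1 : 1 ≤ Module.finrank ℝ ↥W := Nat.one_le_iff_ne_zero.mpr hd
    omega

theorem stmt5 {n : ℕ} (B : Submodule ℝ (Fin n → ℝ)) (X : Finset (Fin n))
    (hX : Module.finrank ℝ ↥(sparseSubspace n Xᶜ ⊓ B) = 0)
    (J : Finset (Fin n)) (hJ : J ⊆ X) :
    ∃ K ⊆ J, K.card = J.card - Module.finrank ℝ ↥(sparseSubspace n (J ∪ Xᶜ) ⊓ B) ∧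
      Module.finrank ℝ ↥(sparseSubspace n (K ∪ Xᶜ) ⊓ B) = 0 := by
  exact stmt5_aux B X hX J.card J rfl hJ
end

section
/- (Matroid union theorem) Let M_1, ..., M_K be matroids on ground sets E_1, ..., E_K with rank functions r_1, ..., r_K. Then their union, with independent sets being all unions I_1 ∪ ... ∪ I_K where I_i is independent in M_i, is a matroid whose rank function satisfies r(U) = min over T ⊆ U of (|U \ T| + Σ_{i=1}^K r_i(T ∩ E_i)). -/
set_option linter.unusedSectionVars false
set_option linter.unusedVariables false
set_option maxHeartbeats 1000000

open Finset

/-- Independence in the union of `K` matroids: unions of one independent set from each. -/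
def UnionIndep {α : Type*} [DecidableEq α] {K : ℕ}
    (Indep : Fin K → Finset α → Prop) (I : Finset α) : Prop :=
  ∃ f : Fin K → Finset α, (∀ i, Indep i (f i)) ∧ I = Finset.univ.biUnion f

def MArc {α : Type*} [DecidableEq α] {K : ℕ} (E : Fin K → Finset α)
    (Indep : Fin K → Finset α → Prop) (f : Fin K → Finset α) (y x : α) : Prop :=
  ∃ i, x ∈ f i ∧ y ∈ E i ∧ y ∉ f i ∧ ¬ Indep i (insert y (f i)) ∧
    Indep i ((insert y (f i)).erase x)

def MTerm {α : Type*} [DecidableEq α] {K : ℕ} (E : Fin K → Finset α)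
    (Indep : Fin K → Finset α → Prop) (f : Fin K → Finset α) (y : α) : Prop :=
  ∃ i, y ∈ E i ∧ y ∉ f i ∧ Indep i (insert y (f i))

section SingleMatroid

variable {α : Type*} [DecidableEq α]
variable {Ind : Finset α → Prop} {rk : Finset α → ℕ}
variable (hdown : ∀ I J, I ⊆ J → Ind J → Ind I)
variable (hexch : ∀ I J, Ind I → Ind J → I.card < J.card → ∃ b ∈ J \ I, Ind (insert b I))
variable (hrk : ∀ J, IsGreatest {k : ℕ | ∃ I ⊆ J, Ind I ∧ I.card = k} (rk J))

include hrk

lemma rk_witness (J : Finset α) : ∃ I ⊆ J, Ind I ∧ I.card = rk J := (hrk J).1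

lemma le_rk {I J : Finset α} (h : I ⊆ J) (hi : Ind I) : I.card ≤ rk J :=
  (hrk J).2 ⟨I, h, hi, rfl⟩

lemma rk_le_card (J : Finset α) : rk J ≤ J.card := by
  obtain ⟨I, hIJ, _, hc⟩ := (hrk J).1
  exact hc ▸ card_le_card hIJ

lemma rk_eq_of_indep {J : Finset α} (h : Ind J) : rk J = J.card :=
  le_antisymm (rk_le_card hrk J) (le_rk hrk Subset.rfl h)

include hdown

lemma indep_of_rk_eq {J : Finset α} (h : rk J = J.card) : Ind J := by
  obtain ⟨I, hIJ, hi, hc⟩ := (hrk J).1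
  have : I = J := eq_of_subset_of_card_le hIJ (by omega)
  exact this ▸ hi

omit hrk

lemma dep_superset {A B : Finset α} (h : A ⊆ B) (hA : ¬ Ind A) : ¬ Ind B :=
  fun hB => hA (hdown _ _ h hB)

include hrk

lemma rk_lt_of_dep {J : Finset α} (h : ¬ Ind J) : rk J < J.card :=
  lt_of_le_of_ne (rk_le_card hrk J) (fun e => h (indep_of_rk_eq hdown hrk e))

include hexch

lemma exists_basis_between {A S : Finset α} (hA : Ind A) (hAS : A ⊆ S) :
    ∃ B, A ⊆ B ∧ B ⊆ S ∧ Ind B ∧ B.card = rk S := by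
  obtain ⟨n, hn⟩ : ∃ n, rk S ≤ A.card + n := ⟨rk S, by omega⟩
  induction n generalizing A with
  | zero =>
    exact ⟨A, Subset.rfl, hAS, hA, le_antisymm (le_rk hrk hAS hA) (by omega)⟩
  | succ n ih =>
    rcases le_or_gt (rk S) A.card with h | h
    · exact ⟨A, Subset.rfl, hAS, hA, le_antisymm (le_rk hrk hAS hA) h⟩
    · obtain ⟨W, hWS, hW, hWc⟩ := (hrk S).1
      obtain ⟨b, hb, hbi⟩ := hexch A W hA hW (by omega)
      have hbA : b ∉ A := (mem_sdiff.mp hb).2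
      have hsub : insert b A ⊆ S := insert_subset (hWS (mem_sdiff.mp hb).1) hAS
      obtain ⟨B, h1, h2, h3, h4⟩ := ih hbi hsub (by rw [card_insert_of_notMem hbA]; omega)
      exact ⟨B, (subset_insert _ _).trans h1, h2, h3, h4⟩

omit hdown in
lemma span1 {X Y : Finset α} (hX : Ind X)
    (h : ∀ y ∈ Y, y ∈ X ∨ ¬ Ind (insert y X)) : rk Y ≤ X.card := by
  obtain ⟨W, hWY, hW, hWc⟩ := (hrk Y).1
  rw [← hWc]
  by_contra hc
  obtain ⟨b, hb, hbi⟩ := hexch X W hX hW (by omega)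
  rcases h b (hWY (mem_sdiff.mp hb).1) with h' | h'
  · exact (mem_sdiff.mp hb).2 h'
  · exact h' hbi

omit hexch hrk in
lemma exists_mindep {D : Finset α} (hD : ¬ Ind D) :
    ∃ C ⊆ D, ¬ Ind C ∧ ∀ z ∈ C, Ind (C.erase z) := by
  induction D using Finset.strongInduction with
  | _ D ih =>
    by_cases h : ∀ z ∈ D, Ind (D.erase z)
    · exact ⟨D, Subset.rfl, hD, h⟩
    · push_neg at h
      obtain ⟨z, hz, hdep⟩ := h
      obtain ⟨C, h1, h2, h3⟩ := ih (D.erase z) (erase_ssubset hz) hdep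
      exact ⟨C, h1.trans (erase_subset _ _), h2, h3⟩

lemma circ_fact {X C : Finset α} {y x : α} (hX : Ind X)
    (hCS : C ⊆ insert y X) (hCdep : ¬ Ind C) (hCmin : ∀ z ∈ C, Ind (C.erase z))
    (hx : x ∈ C) : Ind ((insert y X).erase x) := by
  have hSdep : ¬ Ind (insert y X) := dep_superset hdown hCS hCdep
  have hyX : y ∉ X := fun h => hSdep (by rwa [insert_eq_self.mpr h])
  have hcard : (insert y X).card = X.card + 1 := card_insert_of_notMem hyX
  have hrkS : rk (insert y X) = X.card := by
    have h1 := rk_lt_of_dep hdown hrk hSdep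
    have h2 := le_rk hrk (subset_insert y X) hX
    omega
  obtain ⟨B, hB1, hB2, hB3, hB4⟩ :=
    exists_basis_between hdown hexch hrk (hCmin x hx) ((erase_subset _ _).trans hCS)
  have hxB : x ∉ B := by
    intro hxB
    exact (dep_superset hdown (by
      intro z hz
      rcases eq_or_ne z x with h' | hne
      · rw [h']; exact hxB
      · exact hB1 (mem_erase.mpr ⟨hne, hz⟩)) hCdep) hB3
  have hxS : x ∈ insert y X := hCS hx
  have : B = (insert y X).erase x := by
    apply eq_of_subset_of_card_le (fun z hz => mem_erase.mpr ⟨fun e => hxB (by rw [← e]; exact hz), hB2 hz⟩)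
    rw [card_erase_of_mem hxS]
    omega
  exact this ▸ hB3

end SingleMatroid


section UnionM

variable {α : Type*} [DecidableEq α] [Fintype α] {K : ℕ}
    {E : Fin K → Finset α} {Indep : Fin K → Finset α → Prop}
    {r : Fin K → Finset α → ℕ}
    (hIE : ∀ i I, Indep i I → I ⊆ E i)
    (hdown : ∀ i I J, I ⊆ J → Indep i J → Indep i I)
    (hexch : ∀ i I J, Indep i I → Indep i J → I.card < J.card →
      ∃ b ∈ J \ I, Indep i (insert b I))
    (hr : ∀ i J, IsGreatest {k : ℕ | ∃ I ⊆ J, Indep i I ∧ I.card = k} (r i J))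

include hdown in
lemma disjointify {I : Finset α} (h : UnionIndep Indep I) :
    ∃ f : Fin K → Finset α, (∀ i, Indep i (f i)) ∧
      (∀ i j, i ≠ j → Disjoint (f i) (f j)) ∧ I = Finset.univ.biUnion f := by
  obtain ⟨g, hg, rfl⟩ := h
  refine ⟨fun i => g i \ (Finset.univ.filter (· < i)).biUnion g, ?_, ?_, ?_⟩
  · exact fun i => hdown i _ _ (sdiff_subset) (hg i)
  · intro i j hij
    rcases lt_or_gt_of_ne hij with h' | h'
    · rw [disjoint_comm]
      rw [disjoint_left]
      intro x hx hx2
      have := (mem_sdiff.mp hx).2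
      exact this (mem_biUnion.mpr ⟨i, mem_filter.mpr ⟨mem_univ i, h'⟩, (mem_sdiff.mp hx2).1⟩)
    · rw [disjoint_left]
      intro x hx hx2
      have := (mem_sdiff.mp hx).2
      exact this (mem_biUnion.mpr ⟨j, mem_filter.mpr ⟨mem_univ j, h'⟩, (mem_sdiff.mp hx2).1⟩)
  · ext x
    simp only [mem_biUnion, mem_univ, true_and, mem_sdiff, mem_filter]
    constructor
    · rintro ⟨i, hi⟩
      have hne : (Finset.univ.filter (fun j => x ∈ g j)).Nonempty :=
        ⟨i, mem_filter.mpr ⟨mem_univ i, hi⟩⟩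
      set i₀ := (Finset.univ.filter (fun j => x ∈ g j)).min' hne with hi₀
      refine ⟨i₀, (mem_filter.mp ((Finset.univ.filter (fun j => x ∈ g j)).min'_mem hne)).2, ?_⟩
      intro hx
      obtain ⟨j, hj1, hj2⟩ := hx
      have : i₀ ≤ j := min'_le _ _ (mem_filter.mpr ⟨mem_univ j, hj2⟩)
      omega
    · rintro ⟨i, hi, _⟩
      exact ⟨i, hi⟩

include hIE hdown hr in
lemma union_ub {U T J : Finset α} (hJ : UnionIndep Indep J) (hJU : J ⊆ U) (hTU : T ⊆ U) :
    J.card ≤ (U \ T).card + ∑ i, r i (T ∩ E i) := by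
  obtain ⟨g, hg, rfl⟩ := hJ
  set J := Finset.univ.biUnion g with hJdef
  have h1 : J.card = (J \ T).card + (J ∩ T).card := (card_sdiff_add_card_inter J T).symm
  have h2 : (J \ T).card ≤ (U \ T).card := card_le_card (sdiff_subset_sdiff hJU Subset.rfl)
  have h3 : J ∩ T = Finset.univ.biUnion (fun i => g i ∩ T) := by
    ext x; simp [hJdef, mem_biUnion, and_comm, exists_and_left, and_assoc]
  have h4 : (J ∩ T).card ≤ ∑ i, (g i ∩ T).card := h3 ▸ card_biUnion_le
  have h5 : ∀ i, (g i ∩ T).card ≤ r i (T ∩ E i) := by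
    intro i
    refine (hr i (T ∩ E i)).2 ⟨g i ∩ T, ?_, hdown i _ _ inter_subset_left (hg i), rfl⟩
    intro x hx
    exact mem_inter.mpr ⟨(mem_inter.mp hx).2, hIE i _ (hg i) (mem_inter.mp hx).1⟩
  calc J.card = (J \ T).card + (J ∩ T).card := h1
    _ ≤ (U \ T).card + ∑ i, (g i ∩ T).card := add_le_add h2 h4
    _ ≤ _ := Nat.add_le_add_left (Finset.sum_le_sum fun i _ => h5 i) _


include hdown hexch hr in
lemma union_aug : ∀ (t : ℕ) (f : Fin K → Finset α) (v : ℕ → α),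
    (∀ i, Indep i (f i)) →
    (∀ i j, i ≠ j → Disjoint (f i) (f j)) →
    v 0 ∉ Finset.univ.biUnion f →
    (∀ a b, a < b → b ≤ t → v a ≠ v b) →
    (∀ s, s < t → MArc E Indep f (v s) (v (s+1))) →
    (∀ a b, a + 1 < b → b ≤ t → ¬ MArc E Indep f (v a) (v b)) →
    (∀ s, s < t → ¬ MTerm E Indep f (v s)) →
    MTerm E Indep f (v t) →
    UnionIndep Indep (insert (v 0) (Finset.univ.biUnion f)) := by
  intro t
  induction t with
  | zero =>
    intro f v hf hdisj hv0 _ _ _ _ hterm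
    obtain ⟨j, hEj, hnfj, hindj⟩ := hterm
    refine ⟨Function.update f j (insert (v 0) (f j)), ?_, ?_⟩
    · intro l
      rcases eq_or_ne l j with hlj | hlj
      · rw [hlj, Function.update_self]; exact hindj
      · rw [Function.update_of_ne hlj]; exact hf l
    · ext x
      simp only [mem_insert, mem_biUnion, mem_univ, true_and]
      constructor
      · rintro (rfl | ⟨l, hl⟩)
        · exact ⟨j, by rw [Function.update_self]; exact mem_insert_self _ _⟩
        · rcases eq_or_ne l j with hlj | hlj
          · exact ⟨j, by rw [Function.update_self]; exact mem_insert_of_mem (hlj ▸ hl)⟩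
          · exact ⟨l, by rw [Function.update_of_ne hlj]; exact hl⟩
      · rintro ⟨l, hl⟩
        rcases eq_or_ne l j with hlj | hlj
        · rw [hlj, Function.update_self] at hl
          rcases mem_insert.mp hl with h | h
          · exact Or.inl h
          · exact Or.inr ⟨j, h⟩
        · rw [Function.update_of_ne hlj] at hl
          exact Or.inr ⟨l, hl⟩
  | succ t ih =>
    intro f v hf hdisj hv0 hvne harc hchord hnterm hterm
    obtain ⟨i, hvt1fi, hvtE, hvtnfi, hdepi, hindi⟩ := harc t (Nat.lt_succ_self t)
    obtain ⟨j, hEj, hnfj, hindj⟩ := hterm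
    have hij : i ≠ j := fun h => hnfj (h ▸ hvt1fi)
    set w := v (t+1) with hw
    -- the new system g
    set g : Fin K → Finset α :=
      Function.update (Function.update f i ((f i).erase w)) j (insert w (f j)) with hgdef
    have hgi : g i = (f i).erase w := by
      simp [hgdef, Function.update_of_ne hij]
    have hgj : g j = insert w (f j) := by simp [hgdef]
    have hgl : ∀ l, l ≠ i → l ≠ j → g l = f l := by
      intro l hli hlj
      simp [hgdef, Function.update_of_ne hlj, Function.update_of_ne hli]
    -- characterization of membership in g
    have hmemg : ∀ l x, x ∈ g l → (x = w ∧ l = j) ∨ (x ≠ w ∧ x ∈ f l) := by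
      intro l x hx
      rcases eq_or_ne l j with hlj | hlj
      · rw [hlj, hgj] at hx
        rcases mem_insert.mp hx with h | h
        · exact Or.inl ⟨h, hlj⟩
        · exact Or.inr ⟨fun e => hnfj (e ▸ h), by rw [hlj]; exact h⟩
      · rcases eq_or_ne l i with hli | hli
        · rw [hli, hgi] at hx
          exact Or.inr ⟨(mem_erase.mp hx).1, by rw [hli]; exact (mem_erase.mp hx).2⟩
        · rw [hgl l hli hlj] at hx
          exact Or.inr ⟨fun e => (disjoint_left.mp (hdisj l i hli)) hx (e ▸ hvt1fi), hx⟩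
    have hgindep : ∀ l, Indep l (g l) := by
      intro l
      rcases eq_or_ne l j with hlj | hlj
      · rw [hlj, hgj]; exact hindj
      · rcases eq_or_ne l i with hli | hli
        · rw [hli, hgi]; exact hdown i _ _ (erase_subset _ _) (hf i)
        · rw [hgl l hli hlj]; exact hf l
    have hgdisj : ∀ l m, l ≠ m → Disjoint (g l) (g m) := by
      intro l m hlm
      rw [disjoint_left]
      intro x hxl hxm
      rcases hmemg l x hxl with ⟨hxw, hljj⟩ | ⟨hne, hxfl⟩
      · rcases hmemg m x hxm with ⟨hxw2, hmjj⟩ | ⟨hne2, _⟩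
        · exact hlm (hljj.trans hmjj.symm)
        · exact hne2 hxw
      · rcases hmemg m x hxm with ⟨hxw2, _⟩ | ⟨_, hxfm⟩
        · exact hne hxw2
        · exact (disjoint_left.mp (hdisj l m hlm)) hxfl hxfm
    have hUnion : Finset.univ.biUnion g = Finset.univ.biUnion f := by
      ext x
      simp only [mem_biUnion, mem_univ, true_and]
      constructor
      · rintro ⟨l, hl⟩
        rcases hmemg l x hl with ⟨rfl, _⟩ | ⟨_, h⟩
        · exact ⟨i, hvt1fi⟩
        · exact ⟨l, h⟩
      · rintro ⟨l, hl⟩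
        rcases eq_or_ne x w with hxw | hxw
        · exact ⟨j, by rw [hgj, hxw]; exact mem_insert_self _ _⟩
        · rcases eq_or_ne l j with hlj | hlj
          · exact ⟨j, by rw [hgj]; exact mem_insert_of_mem (hlj ▸ hl)⟩
          · rcases eq_or_ne l i with hli | hli
            · exact ⟨i, by rw [hgi]; exact mem_erase.mpr ⟨hxw, hli ▸ hl⟩⟩
            · exact ⟨l, by rw [hgl l hli hlj]; exact hl⟩
    -- distinctness shortcuts
    have hne_w : ∀ s, s ≤ t → v s ≠ w := fun s hs => hvne s (t+1) (by omega) le_rfl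
    -- apply ih
    have main := ih g v hgindep hgdisj (by rw [hUnion]; exact hv0)
      (fun a b hab hbt => hvne a b hab (by omega))
      ?_ ?_ ?_ ?_
    · rwa [hUnion] at main
    -- arcs
    · intro s hst
      obtain ⟨l, h1, h2, h3, h4, h5⟩ := harc s (by omega)
      have hvs_ne_w : v s ≠ w := hne_w s (by omega)
      have hvs1_ne_w : v (s+1) ≠ w := hne_w (s+1) (by omega)
      rcases eq_or_ne l i with hli | hli
      · -- label i
        rw [hli] at h1 h2 h3 h4 h5
        refine ⟨i, ?_, h2, ?_, ?_, ?_⟩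
        · rw [hgi]; exact mem_erase.mpr ⟨hvs1_ne_w, h1⟩
        · rw [hgi]; exact fun hx => h3 (mem_of_mem_erase hx)
        · rw [hgi, ← erase_insert_of_ne hvs_ne_w]
          intro hcon
          exact hchord s (t+1) (by omega) le_rfl ⟨i, hvt1fi, h2, h3, h4, hcon⟩
        · rw [hgi, ← erase_insert_of_ne hvs_ne_w]
          refine hdown i _ _ ?_ h5
          intro z hz
          simp only [mem_erase] at hz ⊢
          exact ⟨hz.1, hz.2.2⟩
      · rcases eq_or_ne l j with hlj | hlj
        · -- label j
          rw [hlj] at h1 h2 h3 h4 h5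
          have hD : Indep j ((insert (v s) (f j)).erase (v (s+1))) := h5
          have hcardD : ((insert (v s) (f j)).erase (v (s+1))).card = (f j).card := by
            rw [card_erase_of_mem (mem_insert_of_mem h1), card_insert_of_notMem h3]
            omega
          have hcardX : (insert w (f j)).card = (f j).card + 1 :=
            card_insert_of_notMem hnfj
          obtain ⟨b, hb, hbi⟩ := hexch j _ _ hD hindj (by omega)
          have hbX := (mem_sdiff.mp hb).1
          have hbD := (mem_sdiff.mp hb).2
          have hbw : b = w := by
            rcases mem_insert.mp hbX with h | h
            · exact h
            · exfalso
              have hbvs1 : b = v (s+1) := by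
                by_contra hne
                exact hbD (mem_erase.mpr ⟨hne, mem_insert_of_mem h⟩)
              rw [hbvs1, insert_erase (mem_insert_of_mem h1)] at hbi
              exact h4 hbi
          refine ⟨j, ?_, h2, ?_, ?_, ?_⟩
          · rw [hgj]; exact mem_insert_of_mem h1
          · rw [hgj]
            intro hx
            rcases mem_insert.mp hx with h | h
            · exact hvs_ne_w h
            · exact h3 h
          · rw [hgj]
            refine fun hcon => h4 (hdown j _ _ ?_ hcon)
            exact insert_subset_insert _ (subset_insert _ _)
          · rw [hgj]
            have hset : (insert (v s) (insert w (f j))).erase (v (s+1)) =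
                insert w ((insert (v s) (f j)).erase (v (s+1))) := by
              rw [Finset.insert_comm, erase_insert_of_ne (Ne.symm hvs1_ne_w)]
            rw [hset]
            rw [hbw] at hbi
            exact hbi
        · -- other label
          refine ⟨l, ?_, h2, ?_, ?_, ?_⟩ <;> rw [hgl l hli hlj]
          exacts [h1, h3, h4, h5]
    -- chords
    · intro a b hab hbt hcon
      obtain ⟨l, h1, h2, h3, h4, h5⟩ := hcon
      have hva_ne_w : v a ≠ w := hne_w a (by omega)
      have hvb_ne_w : v b ≠ w := hne_w b (by omega)
      rcases eq_or_ne l i with hli | hli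
      · -- label i : circuit argument
        rw [hli] at h1 h2 h3 h4 h5
        rw [hgi] at h1 h3 h4 h5
        have hvbfi : v b ∈ f i := mem_of_mem_erase h1
        have hvanfi : v a ∉ f i := fun hx => h3 (mem_erase.mpr ⟨hva_ne_w, hx⟩)
        rw [← erase_insert_of_ne hva_ne_w] at h4 h5
        obtain ⟨C, hCsub, hCdep, hCmin⟩ := exists_mindep (hdown i) h4
        have hvbC : v b ∈ C := by
          by_contra hvbC
          refine hCdep (hdown i _ _ ?_ h5)
          intro z hz
          exact mem_erase.mpr ⟨fun e => hvbC (e ▸ hz), hCsub hz⟩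
        have hCsub2 : C ⊆ insert (v a) (f i) := hCsub.trans (erase_subset _ _)
        have hind2 : Indep i ((insert (v a) (f i)).erase (v b)) :=
          circ_fact (hdown i) (hexch i) (hr i) (hf i) hCsub2 hCdep hCmin hvbC
        have hdep2 : ¬ Indep i (insert (v a) (f i)) :=
          fun hcon2 => h4 (hdown i _ _ (erase_subset _ _) hcon2)
        exact hchord a b hab (by omega) ⟨i, hvbfi, h2, hvanfi, hdep2, hind2⟩
      · rcases eq_or_ne l j with hlj | hlj
        · -- label j
          rw [hlj] at h1 h2 h3 h4 h5
          rw [hgj] at h1 h3 h4 h5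
          have hvanfj : v a ∉ f j := fun hx => h3 (mem_insert_of_mem hx)
          have hvbfj : v b ∈ f j := by
            rcases mem_insert.mp h1 with h | h
            · exact absurd h hvb_ne_w
            · exact h
          by_cases hdep2 : Indep j (insert (v a) (f j))
          · exact hnterm a (by omega) ⟨j, h2, hvanfj, hdep2⟩
          · have hind2 : Indep j ((insert (v a) (f j)).erase (v b)) := by
              refine hdown j _ _ ?_ h5
              intro z hz
              rw [mem_erase] at hz ⊢
              exact ⟨hz.1, mem_insert.mpr (Or.imp_right mem_insert_of_mem (mem_insert.mp hz.2))⟩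
            exact hchord a b hab (by omega) ⟨j, hvbfj, h2, hvanfj, hdep2, hind2⟩
        · rw [hgl l hli hlj] at h1 h3 h4 h5
          exact hchord a b hab (by omega) ⟨l, h1, h2, h3, h4, h5⟩
    -- terminals
    · intro s hst hcon
      obtain ⟨l, h1, h2, h3⟩ := hcon
      have hvs_ne_w : v s ≠ w := hne_w s (by omega)
      rcases eq_or_ne l i with hli | hli
      · rw [hli] at h1 h2 h3
        rw [hgi] at h2 h3
        have hvsnfi : v s ∉ f i := fun hx => h2 (mem_erase.mpr ⟨hvs_ne_w, hx⟩)
        by_cases hdep2 : Indep i (insert (v s) (f i))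
        · exact hnterm s (by omega) ⟨i, h1, hvsnfi, hdep2⟩
        · rw [← erase_insert_of_ne hvs_ne_w] at h3
          exact hchord s (t+1) (by omega) le_rfl ⟨i, hvt1fi, h1, hvsnfi, hdep2, h3⟩
      · rcases eq_or_ne l j with hlj | hlj
        · rw [hlj] at h1 h2 h3
          rw [hgj] at h2 h3
          have hvsnfj : v s ∉ f j := fun hx => h2 (mem_insert_of_mem hx)
          have : Indep j (insert (v s) (f j)) := by
            refine hdown j _ _ ?_ h3
            exact insert_subset_insert _ (subset_insert _ _)
          exact hnterm s (by omega) ⟨j, h1, hvsnfj, this⟩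
        · rw [hgl l hli hlj] at h2 h3
          exact hnterm s (by omega) ⟨l, h1, h2, h3⟩
    -- new terminal at v t
    · refine ⟨i, hvtE, ?_, ?_⟩
      · rw [hgi]; exact fun hx => hvtnfi (mem_of_mem_erase hx)
      · rw [hgi, ← erase_insert_of_ne (hne_w t le_rfl)]
        exact hindi


include hdown hexch hr in
lemma reach_aug {f : Fin K → Finset α}
    (hf : ∀ i, Indep i (f i)) (hdisj : ∀ i j, i ≠ j → Disjoint (f i) (f j))
    {U : Finset α} {w x : α} (hwU : w ∈ U) (hwI : w ∉ Finset.univ.biUnion f)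
    (hreach : Relation.ReflTransGen (MArc E Indep f) w x) (hterm : MTerm E Indep f x) :
    ∃ b ∈ U, b ∉ Finset.univ.biUnion f ∧
      UnionIndep Indep (insert b (Finset.univ.biUnion f)) := by
  classical
  have hQ : ∃ t, ∃ v : ℕ → α, v 0 = w ∧ v t = x ∧
      ∀ s, s < t → MArc E Indep f (v s) (v (s+1)) := by
    clear hterm
    induction hreach with
    | refl => exact ⟨0, fun _ => w, rfl, rfl, by omega⟩
    | @tail b c hab harc ih =>
      obtain ⟨t, v, h0, hts, harcs⟩ := ih
      refine ⟨t+1, fun n => if n ≤ t then v n else c, by simp [h0], by simp, ?_⟩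
      intro s hs
      rcases Nat.lt_or_ge s t with h | h
      · simpa [Nat.le_of_lt h, Nat.succ_le_of_lt h] using harcs s h
      · have hst : s = t := by omega
        subst hst
        simpa [hts] using harc
  obtain ⟨t1, v1, h10, h1t, h1arcs⟩ := hQ
  set P : ℕ → Prop := fun t => ∃ v : ℕ → α, v 0 ∈ U ∧ v 0 ∉ Finset.univ.biUnion f ∧
      (∀ s, s < t → MArc E Indep f (v s) (v (s+1))) ∧ MTerm E Indep f (v t) with hPdef
  have hex : ∃ t, P t := ⟨t1, v1, h10 ▸ hwU, h10 ▸ hwI, h1arcs, h1t ▸ hterm⟩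
  obtain ⟨t₀, hPt₀, hmin⟩ : ∃ t, P t ∧ ∀ s, s < t → ¬ P s :=
    ⟨Nat.find hex, Nat.find_spec hex, fun s hs => Nat.find_min hex hs⟩
  obtain ⟨v, hv0U, hv0I, harcs, hterm'⟩ := hPt₀
  have hnterm : ∀ s, s < t₀ → ¬ MTerm E Indep f (v s) := by
    intro s hs hcon
    exact hmin s hs ⟨v, hv0U, hv0I, fun a ha => harcs a (by omega), hcon⟩
  have hvne : ∀ a b, a < b → b ≤ t₀ → v a ≠ v b := by
    intro a b hab hbt heq
    rcases eq_or_lt_of_le hbt with hbt' | hbt'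
    · exact hnterm a (by omega) (by rw [heq, hbt']; exact hterm')
    · refine hmin (t₀ - (b - a)) (by omega)
        ⟨fun n => if n ≤ a then v n else v (n + (b - a)), by simpa using hv0U,
          by simpa using hv0I, ?_, ?_⟩
      · intro s hs
        dsimp only
        rcases lt_trichotomy s a with h | h | h
        · rw [if_pos (by omega), if_pos (by omega)]
          exact harcs s (by omega)
        · rw [if_pos (by omega), if_neg (by omega)]
          have e1 : s + 1 + (b - a) = b + 1 := by omega
          rw [e1, h, heq]
          exact harcs b (by omega)
        · rw [if_neg (by omega), if_neg (by omega)]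
          have e1 : s + 1 + (b - a) = s + (b - a) + 1 := by omega
          rw [e1]
          exact harcs (s + (b - a)) (by omega)
      · dsimp only
        rw [if_neg (by omega)]
        have e2 : t₀ - (b - a) + (b - a) = t₀ := by omega
        rw [e2]
        exact hterm'
  have hchord : ∀ a b, a + 1 < b → b ≤ t₀ → ¬ MArc E Indep f (v a) (v b) := by
    intro a b hab hbt hcon
    refine hmin (t₀ - (b - a - 1)) (by omega)
      ⟨fun n => if n ≤ a then v n else v (n + (b - a - 1)), by simpa using hv0U,
        by simpa using hv0I, ?_, ?_⟩
    · intro s hs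
      dsimp only
      rcases lt_trichotomy s a with h | h | h
      · rw [if_pos (by omega), if_pos (by omega)]
        exact harcs s (by omega)
      · rw [if_pos (by omega), if_neg (by omega)]
        have e1 : s + 1 + (b - a - 1) = b := by omega
        rw [e1, h]
        exact hcon
      · rw [if_neg (by omega), if_neg (by omega)]
        have e1 : s + 1 + (b - a - 1) = s + (b - a - 1) + 1 := by omega
        rw [e1]
        exact harcs (s + (b - a - 1)) (by omega)
    · dsimp only
      rw [if_neg (by omega)]
      have e2 : t₀ - (b - a - 1) + (b - a - 1) = t₀ := by omega
      rw [e2]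
      exact hterm'
  have := union_aug hdown hexch hr t₀ f v hf hdisj hv0I hvne harcs hchord hnterm hterm'
  exact ⟨v 0, hv0U, hv0I, this⟩


include hdown hexch hr in
lemma union_main {U I : Finset α} (hI : UnionIndep Indep I) (hIU : I ⊆ U)
    (hmax : ∀ b ∈ U, b ∉ I → ¬ UnionIndep Indep (insert b I)) :
    ∃ T ⊆ U, (U \ T).card + ∑ i, r i (T ∩ E i) ≤ I.card := by
  classical
  obtain ⟨f, hf, hdisj, rfl⟩ := disjointify hdown hI
  set I := Finset.univ.biUnion f with hIdef
  set T := U.filter (fun x => ∃ w ∈ U, w ∉ I ∧ Relation.ReflTransGen (MArc E Indep f) w x)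
    with hTdef
  -- no reachable terminal
  have hnt : ∀ x ∈ T, ¬ MTerm E Indep f x := by
    intro x hx hterm
    obtain ⟨w, hwU, hwI, hreach⟩ := (mem_filter.mp hx).2
    obtain ⟨b, hbU, hbI, hbind⟩ := reach_aug hdown hexch hr hf hdisj hwU hwI hreach hterm
    exact hmax b hbU hbI hbind
  -- T is closed under arcs
  have hclosed : ∀ x ∈ T, ∀ y, MArc E Indep f x y → y ∈ T := by
    intro x hx y harc
    obtain ⟨i, hyfi, -, -, -, -⟩ := id harc
    have hyU : y ∈ U := hIU (mem_biUnion.mpr ⟨i, mem_univ i, hyfi⟩)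
    obtain ⟨w, hwU, hwI, hreach⟩ := (mem_filter.mp hx).2
    exact mem_filter.mpr ⟨hyU, w, hwU, hwI, hreach.tail harc⟩
  -- rank bound
  have hrank : ∀ i, r i (T ∩ E i) ≤ (f i ∩ T).card := by
    intro i
    refine span1 (hexch i) (hr i) (hdown i _ _ inter_subset_left (hf i)) ?_
    intro y hy
    have hyT : y ∈ T := (mem_inter.mp hy).1
    have hyE : y ∈ E i := (mem_inter.mp hy).2
    by_cases hyfi : y ∈ f i
    · exact Or.inl (mem_inter.mpr ⟨hyfi, hyT⟩)
    right
    intro hind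
    have hdep : ¬ Indep i (insert y (f i)) := fun h => hnt y hyT ⟨i, hyE, hyfi, h⟩
    have hsub : insert y (f i ∩ T) ⊆ insert y (f i) :=
      insert_subset_insert _ inter_subset_left
    obtain ⟨B, hB1, hB2, hB3, hB4⟩ :=
      exists_basis_between (hdown i) (hexch i) (hr i) hind hsub
    have hyS : y ∉ f i := hyfi
    have hrkS : r i (insert y (f i)) = (f i).card := by
      have h2 : (r i (insert y (f i))) ≤ (f i).card := by
        have hc : (insert y (f i)).card = (f i).card + 1 := card_insert_of_notMem hyS
        by_contra hcon
        obtain ⟨W, hW1, hW2, hW3⟩ := (hr i (insert y (f i))).1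
        have : W = insert y (f i) := eq_of_subset_of_card_le hW1 (by omega)
        exact hdep (this ▸ hW2)
      have h1 : (f i).card ≤ r i (insert y (f i)) :=
        (hr i (insert y (f i))).2 ⟨f i, subset_insert _ _, hf i, rfl⟩
      omega
    rw [hrkS] at hB4
    have hcardS : (insert y (f i)).card = (f i).card + 1 := card_insert_of_notMem hyS
    obtain ⟨z, hzS, hzB⟩ : ∃ z ∈ insert y (f i), z ∉ B := by
      by_contra hcon
      push_neg at hcon
      have : insert y (f i) ⊆ B := hcon
      have := card_le_card this
      omega
    have hzy : z ≠ y := fun e => hzB (e ▸ hB1 (mem_insert_self _ _))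
    have hzfi : z ∈ f i := by
      rcases mem_insert.mp hzS with h | h
      · exact absurd h hzy
      · exact h
    have hBeq : B = (insert y (f i)).erase z := by
      apply eq_of_subset_of_card_le
      · intro u hu
        exact mem_erase.mpr ⟨fun e => hzB (e ▸ hu), hB2 hu⟩
      · rw [card_erase_of_mem hzS]
        omega
    have hzT : z ∉ T := by
      intro hzT
      exact hzB (hB1 (mem_insert_of_mem (mem_inter.mpr ⟨hzfi, hzT⟩)))
    have harc : MArc E Indep f y z := ⟨i, hzfi, hyE, hyfi, hdep, hBeq ▸ hB3⟩
    exact hzT (hclosed y hyT z harc)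
  -- counting
  refine ⟨T, filter_subset _ _, ?_⟩
  have hUT : U \ T ⊆ I \ T := by
    intro u hu
    have huU := (mem_sdiff.mp hu).1
    have huT := (mem_sdiff.mp hu).2
    refine mem_sdiff.mpr ⟨?_, huT⟩
    by_contra huI
    exact huT (mem_filter.mpr ⟨huU, u, huU, huI, Relation.ReflTransGen.refl⟩)
  have h1 : (U \ T).card ≤ (I \ T).card := card_le_card hUT
  have h2 : I ∩ T = Finset.univ.biUnion (fun i => f i ∩ T) := by
    ext u
    simp only [mem_inter, hIdef, mem_biUnion, mem_univ, true_and]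
    tauto
  have h3 : (I ∩ T).card = ∑ i, (f i ∩ T).card := by
    rw [h2]
    apply card_biUnion
    intro i _ j _ hij
    exact disjoint_of_subset_left inter_subset_left
      (disjoint_of_subset_right inter_subset_left (hdisj i j hij))
  have h4 : (I \ T).card + (I ∩ T).card = I.card := card_sdiff_add_card_inter I T
  have h5 : ∑ i, r i (T ∩ E i) ≤ ∑ i, (f i ∩ T).card :=
    Finset.sum_le_sum fun i _ => hrank i
  omega


end UnionM


theorem stmt7 {α : Type*} [DecidableEq α] [Fintype α] {K : ℕ}
    (E : Fin K → Finset α) (Indep : Fin K → Finset α → Prop)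
    (r : Fin K → Finset α → ℕ)
    (hIE : ∀ i I, Indep i I → I ⊆ E i)
    (hempty : ∀ i, Indep i ∅)
    (hdown : ∀ i I J, I ⊆ J → Indep i J → Indep i I)
    (hexch : ∀ i I J, Indep i I → Indep i J → I.card < J.card →
      ∃ b ∈ J \ I, Indep i (insert b I))
    (hr : ∀ i J, IsGreatest {k : ℕ | ∃ I ⊆ J, Indep i I ∧ I.card = k} (r i J)) :
    (UnionIndep Indep ∅ ∧
     (∀ I J : Finset α, I ⊆ J → UnionIndep Indep J → UnionIndep Indep I) ∧
     (∀ I J : Finset α, UnionIndep Indep I → UnionIndep Indep J → I.card < J.card →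
        ∃ b ∈ J \ I, UnionIndep Indep (insert b I))) ∧
    ∀ U ⊆ Finset.univ.biUnion E,
      IsGreatest {k : ℕ | ∃ I ⊆ U, UnionIndep Indep I ∧ I.card = k}
        (U.powerset.inf' (Finset.powerset_nonempty U)
          (fun T => (U \ T).card + ∑ i, r i (T ∩ E i))) := by
  classical
  have hEmpty : UnionIndep Indep ∅ := ⟨fun _ => ∅, fun i => hempty i, by ext x; simp⟩
  have hSubset : ∀ I J : Finset α, I ⊆ J → UnionIndep Indep J → UnionIndep Indep I := by
    intro I J hIJ ⟨g, hg, hJg⟩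
    refine ⟨fun i => g i ∩ I, fun i => hdown i _ _ inter_subset_left (hg i), ?_⟩
    ext x
    simp only [mem_biUnion, mem_univ, true_and, mem_inter]
    constructor
    · intro hx
      have : x ∈ J := hIJ hx
      rw [hJg] at this
      obtain ⟨i, _, hi⟩ := mem_biUnion.mp this
      exact ⟨i, hi, hx⟩
    · rintro ⟨i, _, hx⟩
      exact hx
  constructor
  · refine ⟨hEmpty, hSubset, ?_⟩
    intro I J hI hJ hcard
    by_contra hno
    push_neg at hno
    set U := I ∪ J with hU
    have hmax : ∀ b ∈ U, b ∉ I → ¬ UnionIndep Indep (insert b I) := by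
      intro b hbU hbI
      exact hno b (mem_sdiff.mpr ⟨(mem_union.mp hbU).resolve_left hbI, hbI⟩)
    obtain ⟨T, hTU, hbound⟩ := union_main (E := E) hdown hexch hr hI subset_union_left hmax
    have := union_ub hIE hdown hr hJ subset_union_right hTU
    omega
  · intro U hU
    set S := U.powerset.filter (fun I => UnionIndep Indep I) with hS
    have hSne : S.Nonempty :=
      ⟨∅, mem_filter.mpr ⟨mem_powerset.mpr (empty_subset U), hEmpty⟩⟩
    obtain ⟨I, hIS, hImax⟩ := exists_max_image S card hSne
    have hIU : I ⊆ U := mem_powerset.mp (mem_filter.mp hIS).1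
    have hIind : UnionIndep Indep I := (mem_filter.mp hIS).2
    have hmax : ∀ b ∈ U, b ∉ I → ¬ UnionIndep Indep (insert b I) := by
      intro b hbU hbI hcon
      have hmem : insert b I ∈ S :=
        mem_filter.mpr ⟨mem_powerset.mpr (insert_subset hbU hIU), hcon⟩
      have := hImax _ hmem
      rw [card_insert_of_notMem hbI] at this
      omega
    obtain ⟨T₀, hT₀U, hbound⟩ := union_main (E := E) hdown hexch hr hIind hIU hmax
    constructor
    · have hle : I.card ≤ U.powerset.inf' (Finset.powerset_nonempty U)
          (fun T => (U \ T).card + ∑ i, r i (T ∩ E i)) :=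
        le_inf' _ _ (fun T hT => union_ub hIE hdown hr hIind hIU (mem_powerset.mp hT))
      have hge : U.powerset.inf' (Finset.powerset_nonempty U)
          (fun T => (U \ T).card + ∑ i, r i (T ∩ E i)) ≤ I.card :=
        le_trans (inf'_le _ (mem_powerset.mpr hT₀U)) hbound
      exact ⟨I, hIU, hIind, by omega⟩
    · rintro k ⟨J, hJU, hJind, rfl⟩
      exact le_inf' _ _ (fun T hT => union_ub hIE hdown hr hJind hJU (mem_powerset.mp hT))
end

section
/- Let B_1, ..., B_K be subspaces of ℝ^n with dim(B_i) = m_i, and suppose Σ m_i = |X| for some X ⊆ [n], with dim(S_{X^c} ∩ B_i) = 0 for all i. Then the following are equivalent: (a) for every partition (I_1, ..., I_K) of X with |I_i| = m_i, Σ_{i=1}^K dim(S_{I_i^c} ∩ B_i) > 0; (b) there exists J ⊆ X with Σ_{i=1}^K dim(S_{J ∪ X^c} ∩ B_i) > |J|. -/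
open Finset MeasureTheory

namespace Stmt10Aux

variable {n : ℕ}

lemma mem_sparse {J : Finset (Fin n)} {v : Fin n → ℝ} :
    v ∈ sparseSubspace n J ↔ ∀ i, i ∉ J → v i = 0 := Iff.rfl

lemma sparse_mono {J J' : Finset (Fin n)} (h : J ⊆ J') :
    sparseSubspace n J ≤ sparseSubspace n J' := by
  intro v hv i hi
  exact hv i (fun hiJ => hi (h hiJ))

lemma sparse_univ : sparseSubspace n Finset.univ = ⊤ := by
  ext v; simp [mem_sparse]

/-- dimension of `S_{Aᶜ} ⊓ B`, i.e. the nullity of the projection of `B` to coordinates `A`. -/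
noncomputable def gdim (B : Submodule ℝ (Fin n → ℝ)) (A : Finset (Fin n)) : ℕ :=
  Module.finrank ℝ ↥(sparseSubspace n Aᶜ ⊓ B)

lemma gdim_empty (B : Submodule ℝ (Fin n → ℝ)) : gdim B ∅ = Module.finrank ℝ ↥B := by
  unfold gdim
  rw [Finset.compl_empty, sparse_univ, top_inf_eq]

lemma gdim_anti (B : Submodule ℝ (Fin n → ℝ)) {A A' : Finset (Fin n)} (h : A ⊆ A') :
    gdim B A' ≤ gdim B A := by
  apply Submodule.finrank_mono
  exact inf_le_inf_right _ (sparse_mono (Finset.compl_subset_compl.mpr h))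

lemma gdim_le (B : Submodule ℝ (Fin n → ℝ)) (A : Finset (Fin n)) :
    gdim B A ≤ Module.finrank ℝ ↥B :=
  Submodule.finrank_mono inf_le_right

/-- key rank ≤ nullity + 1 lemma for one coordinate. -/
lemma finrank_le_inf_ker {M : Type*} [AddCommGroup M] [Module ℝ M] [FiniteDimensional ℝ M]
    (U : Submodule ℝ M) (f : M →ₗ[ℝ] ℝ) :
    Module.finrank ℝ ↥U ≤ Module.finrank ℝ ↥(LinearMap.ker f ⊓ U) + 1 := by
  have h := LinearMap.finrank_range_add_finrank_ker (f ∘ₗ U.subtype)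
  have hker : LinearMap.ker (f ∘ₗ U.subtype) = Submodule.comap U.subtype (LinearMap.ker f ⊓ U) := by
    rw [LinearMap.ker_comp, Submodule.comap_inf, Submodule.comap_subtype_self, inf_top_eq]
  have heq : Module.finrank ℝ ↥(LinearMap.ker (f ∘ₗ U.subtype))
      = Module.finrank ℝ ↥(LinearMap.ker f ⊓ U) := by
    rw [hker]
    exact (Submodule.comapSubtypeEquivOfLe inf_le_right).finrank_eq
  have hrange : Module.finrank ℝ ↥(LinearMap.range (f ∘ₗ U.subtype)) ≤ 1 := by
    simpa using (LinearMap.range (f ∘ₗ U.subtype)).finrank_le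
  omega

lemma sparse_insert_compl (x : Fin n) (A : Finset (Fin n)) :
    sparseSubspace n (insert x A)ᶜ
      = LinearMap.ker (LinearMap.proj (R := ℝ) (φ := fun _ : Fin n => ℝ) x)
        ⊓ sparseSubspace n Aᶜ := by
  ext v
  simp only [Submodule.mem_inf, mem_sparse, Finset.mem_compl, not_not, LinearMap.mem_ker,
    LinearMap.proj_apply, Finset.mem_insert]
  constructor
  · intro h
    exact ⟨h x (Or.inl rfl), fun i hi => h i (Or.inr hi)⟩
  · rintro ⟨hx, h⟩ i (rfl | hi)
    · exact hx
    · exact h i hi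

lemma gdim_insert (B : Submodule ℝ (Fin n → ℝ)) (x : Fin n) (A : Finset (Fin n)) :
    gdim B A ≤ gdim B (insert x A) + 1 := by
  unfold gdim
  rw [sparse_insert_compl, inf_assoc]
  exact finrank_le_inf_ker _ _

lemma sparse_compl_inf (A A' : Finset (Fin n)) :
    sparseSubspace n Aᶜ ⊓ sparseSubspace n A'ᶜ = sparseSubspace n (A ∪ A')ᶜ := by
  ext v
  simp only [Submodule.mem_inf, mem_sparse, Finset.mem_compl, not_not, Finset.mem_union]
  constructor
  · rintro ⟨h1, h2⟩ i (hi | hi)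
    · exact h1 i hi
    · exact h2 i hi
  · intro h
    exact ⟨fun i hi => h i (Or.inl hi), fun i hi => h i (Or.inr hi)⟩

lemma gdim_supermod (B : Submodule ℝ (Fin n → ℝ)) (A A' : Finset (Fin n)) :
    gdim B A + gdim B A' ≤ gdim B (A ∪ A') + gdim B (A ∩ A') := by
  set U := sparseSubspace n Aᶜ ⊓ B
  set W := sparseSubspace n A'ᶜ ⊓ B
  have hkey : Module.finrank ℝ ↥(U ⊔ W) + Module.finrank ℝ ↥(U ⊓ W)
      = Module.finrank ℝ ↥U + Module.finrank ℝ ↥W :=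
    Submodule.finrank_sup_add_finrank_inf_eq U W
  have hinf : U ⊓ W = sparseSubspace n (A ∪ A')ᶜ ⊓ B := by
    rw [← sparse_compl_inf]
    show (sparseSubspace n Aᶜ ⊓ B) ⊓ (sparseSubspace n A'ᶜ ⊓ B) = _
    rw [inf_inf_inf_comm, inf_idem]
  have hsup : U ⊔ W ≤ sparseSubspace n (A ∩ A')ᶜ ⊓ B := by
    apply sup_le
    · exact inf_le_inf_right _ (sparse_mono (Finset.compl_subset_compl.mpr Finset.inter_subset_left))
    · exact inf_le_inf_right _ (sparse_mono (Finset.compl_subset_compl.mpr Finset.inter_subset_right))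
  have h1 : Module.finrank ℝ ↥(U ⊔ W) ≤ gdim B (A ∩ A') := Submodule.finrank_mono hsup
  have h2 : Module.finrank ℝ ↥(U ⊓ W) = gdim B (A ∪ A') := by rw [hinf]; rfl
  have hA : gdim B A = Module.finrank ℝ ↥U := rfl
  have hA' : gdim B A' = Module.finrank ℝ ↥W := rfl
  omega



section Partition
variable {α : Type*} [DecidableEq α] {K : ℕ}

lemma r_union_le (r : Finset α → ℕ) (h1 : ∀ x A, r (insert x A) ≤ r A + 1) :
    ∀ (D A : Finset α), r (A ∪ D) ≤ r A + D.card := by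
  intro D
  induction D using Finset.induction_on with
  | empty => intro A; simp
  | @insert y D hy ih =>
      intro A
      have hu : A ∪ insert y D = insert y (A ∪ D) := by
        ext a; simp [Finset.mem_union, Finset.mem_insert]
      rw [hu, Finset.card_insert_of_notMem hy]
      have := h1 y (A ∪ D)
      have := ih A
      omega

lemma partition_lemma (K : ℕ) (N : ℕ) : ∀ (X : Finset α), X.card = N →
    ∀ (r : Fin K → Finset α → ℕ),
    (∀ i, r i ∅ = 0) →
    (∀ i x A, r i (insert x A) ≤ r i A + 1) →
    (∀ i A A', A ⊆ A' → r i A ≤ r i A') →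
    (∀ i A A', r i (A ∪ A') + r i (A ∩ A') ≤ r i A + r i A') →
    (∀ A ⊆ X, A.card ≤ ∑ i, r i A) →
    ∃ I : Fin K → Finset α, (∀ i, I i ⊆ X) ∧
      (∀ i j, i ≠ j → Disjoint (I i) (I j)) ∧ Finset.univ.biUnion I = X ∧
      ∀ i, r i (I i) = (I i).card := by
  induction N with
  | zero =>
      intro X hX r h0 h1 hmono hsub hall
      rw [Finset.card_eq_zero] at hX
      subst hX
      exact ⟨fun _ => ∅, fun _ => Finset.empty_subset _, fun _ _ _ => Finset.disjoint_empty_left _,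
        by ext a; simp, fun i => by simp [h0 i]⟩
  | succ N ih =>
      intro X hX r h0 h1 hmono hsub hall
      have hXne : X.Nonempty := Finset.card_pos.mp (by omega)
      obtain ⟨x, hx⟩ := hXne
      set X' := X.erase x with hX'
      have hX'card : X'.card = N := by rw [hX', Finset.card_erase_of_mem hx]; omega
      have hX'X : X' ⊆ X := Finset.erase_subset x X
      -- strong claim: there is i₀ with r i₀ {x} = 1 and Hall holds after contraction
      have claim : ∃ i₀, r i₀ ({x} : Finset α) = 1 ∧
          ∀ A ⊆ X', A.card ≤ (∑ j ∈ Finset.univ.erase i₀, r j A) + (r i₀ (insert x A) - 1) := by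
        by_contra hclaim
        push_neg at hclaim
        -- for each i, find a tight set C i with r i (insert x (C i)) = r i (C i)
        have hC : ∀ i : Fin K, ∃ A, A ⊆ X' ∧ (∑ j, r j A ≤ A.card) ∧
            r i (insert x A) = r i A := by
          intro i
          by_cases hi : r i ({x} : Finset α) = 1
          · obtain ⟨A, hAX, hAviol⟩ := hclaim i hi
            have hhallA : A.card ≤ ∑ j, r j A := hall A (hAX.trans hX'X)
            have hsplit : ∑ j ∈ Finset.univ.erase i, r j A + r i A = ∑ j, r j A :=
              Finset.sum_erase_add _ _ (Finset.mem_univ i)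
            have hmA : r i A ≤ r i (insert x A) := hmono i A _ (Finset.subset_insert x A)
            have hins : r i (insert x A) ≤ r i A + 1 := h1 i x A
            have hone : 1 ≤ r i (insert x A) := by
              have : r i ({x} : Finset α) ≤ r i (insert x A) := by
                apply hmono
                simp [Finset.singleton_subset_iff]
              omega
            exact ⟨A, hAX, by omega, by omega⟩
          · have hle : r i ({x} : Finset α) ≤ 1 := by
              have := h1 i x ∅
              have h2 : insert x (∅ : Finset α) = {x} := rfl
              rw [h2, h0 i] at this
              omega
            have hzero : r i ({x} : Finset α) = 0 := by omega
            refine ⟨∅, Finset.empty_subset _, by simp [h0], ?_⟩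
            have h2 : insert x (∅ : Finset α) = {x} := rfl
            rw [h2, hzero, h0]
        choose C hC1 hC2 hC3 using hC
        -- tightness is preserved under unions
        have tight_union : ∀ A B : Finset α, A ⊆ X → B ⊆ X →
            (∑ j, r j A ≤ A.card) → (∑ j, r j B ≤ B.card) →
            (∑ j, r j (A ∪ B) ≤ (A ∪ B).card) := by
          intro A B hA hB htA htB
          have hs : ∑ j, (r j (A ∪ B) + r j (A ∩ B)) ≤ ∑ j, (r j A + r j B) :=
            Finset.sum_le_sum (fun j _ => hsub j A B)
          rw [Finset.sum_add_distrib, Finset.sum_add_distrib] at hs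
          have hcard : (A ∪ B).card + (A ∩ B).card = A.card + B.card :=
            Finset.card_union_add_card_inter A B
          have hhi : (A ∩ B).card ≤ ∑ j, r j (A ∩ B) :=
            hall _ ((Finset.inter_subset_left).trans hA)
          omega
        -- the union U of all C i
        set U := Finset.univ.biUnion C with hU
        have hUkey : ∀ s : Finset (Fin K), s.biUnion C ⊆ X' ∧
            (∑ j, r j (s.biUnion C) ≤ (s.biUnion C).card) := by
          intro s
          induction s using Finset.induction_on with
          | empty => simp [h0]
          | @insert i s hi ihs =>
              rw [Finset.biUnion_insert]
              refine ⟨Finset.union_subset (hC1 i) ihs.1, ?_⟩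
              exact tight_union _ _ ((hC1 i).trans hX'X) (ihs.1.trans hX'X) (hC2 i) ihs.2
        have hUX' : U ⊆ X' := (hUkey Finset.univ).1
        have hUtight : ∑ j, r j U ≤ U.card := (hUkey Finset.univ).2
        -- r j (insert x U) = r j U for all j
        have hins_eq : ∀ j, r j (insert x U) ≤ r j U := by
          intro j
          have hCU : C j ⊆ U := Finset.subset_biUnion_of_mem C (Finset.mem_univ j)
          have := hsub j (insert x (C j)) U
          have hUn : insert x (C j) ∪ U = insert x U := by
            ext a
            simp only [Finset.mem_union, Finset.mem_insert]
            constructor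
            · rintro ((rfl | h) | h)
              · exact Or.inl rfl
              · exact Or.inr (hCU h)
              · exact Or.inr h
            · rintro (rfl | h)
              · exact Or.inl (Or.inl rfl)
              · exact Or.inr h
          have hInt : C j ⊆ (insert x (C j)) ∩ U :=
            Finset.subset_inter (Finset.subset_insert x (C j)) hCU
          have hm := hmono j _ _ hInt
          rw [hUn, hC3 j] at this
          omega
        -- contradiction with Hall on insert x U
        have hxU : x ∉ U := fun h => (Finset.mem_erase.mp (hUX' h)).1 rfl
        have hiXU : insert x U ⊆ X := Finset.insert_subset hx (hUX'.trans hX'X)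
        have hfin := hall (insert x U) hiXU
        rw [Finset.card_insert_of_notMem hxU] at hfin
        have hs : ∑ j, r j (insert x U) ≤ ∑ j, r j U :=
          Finset.sum_le_sum (fun j _ => hins_eq j)
        omega
      obtain ⟨i₀, hx1, hall'⟩ := claim
      -- contracted rank functions
      set r' : Fin K → Finset α → ℕ :=
        fun j A => if j = i₀ then r i₀ (insert x A) - 1 else r j A with hr'
      have hone : ∀ A : Finset α, 1 ≤ r i₀ (insert x A) := by
        intro A
        have : r i₀ ({x} : Finset α) ≤ r i₀ (insert x A) := by
          apply hmono; simp [Finset.singleton_subset_iff]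
        omega
      have h0' : ∀ i, r' i ∅ = 0 := by
        intro i
        by_cases hi : i = i₀
        · simp only [hr', if_pos hi]
          have h2 : insert x (∅ : Finset α) = {x} := rfl
          rw [h2, hx1]
        · simp [hr', hi, h0]
      have h1' : ∀ i y A, r' i (insert y A) ≤ r' i A + 1 := by
        intro i y A
        by_cases hi : i = i₀
        · simp only [hr', if_pos hi]
          have hcomm : insert x (insert y A) = insert y (insert x A) := Finset.insert_comm x y A
          have hh := h1 i₀ y (insert x A)
          have := hone A
          rw [hcomm]
          omega
        · simp only [hr', if_neg hi]
          exact h1 i y A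
      have hmono' : ∀ i A A', A ⊆ A' → r' i A ≤ r' i A' := by
        intro i A A' hAA
        by_cases hi : i = i₀
        · simp only [hr', if_pos hi]
          exact Nat.sub_le_sub_right (hmono i₀ _ _ (Finset.insert_subset_insert x hAA)) 1
        · simp only [hr', if_neg hi]
          exact hmono i A A' hAA
      have hsub' : ∀ i A A', r' i (A ∪ A') + r' i (A ∩ A') ≤ r' i A + r' i A' := by
        intro i A A'
        by_cases hi : i = i₀
        · simp only [hr', if_pos hi]
          have hUn : insert x A ∪ insert x A' = insert x (A ∪ A') := by
            ext a; simp [Finset.mem_union, Finset.mem_insert]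
          have hInt : insert x A ∩ insert x A' = insert x (A ∩ A') := by
            ext a; simp [Finset.mem_inter, Finset.mem_insert]; tauto
          have hh := hsub i₀ (insert x A) (insert x A')
          rw [hUn, hInt] at hh
          have := hone A
          have := hone A'
          have := hone (A ∪ A')
          have := hone (A ∩ A')
          omega
        · simp only [hr', if_neg hi]
          exact hsub i A A'
      have hall'' : ∀ A ⊆ X', A.card ≤ ∑ i, r' i A := by
        intro A hA
        have hsplit : ∑ j ∈ Finset.univ.erase i₀, r' j A + r' i₀ A = ∑ j, r' j A :=
          Finset.sum_erase_add _ _ (Finset.mem_univ i₀)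
        have heq : ∑ j ∈ Finset.univ.erase i₀, r' j A = ∑ j ∈ Finset.univ.erase i₀, r j A := by
          apply Finset.sum_congr rfl
          intro j hj
          have : j ≠ i₀ := (Finset.mem_erase.mp hj).1
          simp [hr', this]
        have hA' := hall' A hA
        have : r' i₀ A = r i₀ (insert x A) - 1 := by simp [hr']
        omega
      obtain ⟨I', hI'X, hI'disj, hI'bi, hI'rank⟩ := ih X' hX'card r' h0' h1' hmono' hsub' hall''
      have hxI' : ∀ k, x ∉ I' k := fun k h => (Finset.mem_erase.mp (hI'X k h)).1 rfl
      set I : Fin K → Finset α := fun j => if j = i₀ then insert x (I' i₀) else I' j with hI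
      refine ⟨I, ?_, ?_, ?_, ?_⟩
      · intro j
        by_cases hj : j = i₀
        · simp only [hI, if_pos hj]
          exact Finset.insert_subset hx ((hI'X i₀).trans hX'X)
        · simp only [hI, if_neg hj]
          exact (hI'X j).trans hX'X
      · intro i j hij
        by_cases hi : i = i₀ <;> by_cases hj : j = i₀
        · exact absurd (hi.trans hj.symm) hij
        · simp only [hI, if_pos hi, if_neg hj]
          rw [Finset.disjoint_insert_left]
          exact ⟨hxI' j, hI'disj i₀ j (hi ▸ hij)⟩
        · simp only [hI, if_neg hi, if_pos hj]
          rw [Finset.disjoint_insert_right]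
          exact ⟨hxI' i, hI'disj i i₀ (hj ▸ hij)⟩
        · simp only [hI, if_neg hi, if_neg hj]
          exact hI'disj i j hij
      · ext a
        simp only [Finset.mem_biUnion, Finset.mem_univ, true_and]
        constructor
        · rintro ⟨j, hj⟩
          by_cases hji : j = i₀
          · simp only [hI, if_pos hji, Finset.mem_insert] at hj
            rcases hj with rfl | hj
            · exact hx
            · exact hX'X (hI'bi ▸ Finset.mem_biUnion.mpr ⟨i₀, Finset.mem_univ _, hj⟩)
          · simp only [hI, if_neg hji] at hj
            exact hX'X (hI'bi ▸ Finset.mem_biUnion.mpr ⟨j, Finset.mem_univ _, hj⟩)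
        · intro ha
          by_cases hax : a = x
          · exact ⟨i₀, by simp [hI, hax]⟩
          · have : a ∈ Finset.univ.biUnion I' := hI'bi ▸ Finset.mem_erase.mpr ⟨hax, ha⟩
            obtain ⟨j, _, hj⟩ := Finset.mem_biUnion.mp this
            refine ⟨j, ?_⟩
            by_cases hji : j = i₀
            · simp [hI, hji, hji ▸ hj]
            · simp [hI, hji, hj]
      · intro j
        by_cases hj : j = i₀
        · rw [hj]
          have hrk := hI'rank i₀
          have hrk' : r i₀ (insert x (I' i₀)) - 1 = (I' i₀).card := by
            simpa [hr'] using hrk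
          simp only [hI, if_pos rfl]
          rw [Finset.card_insert_of_notMem (hxI' i₀)]
          have := hone (I' i₀)
          omega
        · have hrk := hI'rank j
          simp only [hr', if_neg hj] at hrk
          simp only [hI, if_neg hj]
          exact hrk

end Partition

end Stmt10Aux

theorem stmt10 {n K : ℕ} (B : Fin K → Submodule ℝ (Fin n → ℝ)) (m : Fin K → ℕ)
    (hdim : ∀ i, Module.finrank ℝ ↥(B i) = m i) (X : Finset (Fin n))
    (hsum : ∑ i, m i = X.card)
    (htriv : ∀ i, Module.finrank ℝ ↥(sparseSubspace n Xᶜ ⊓ B i) = 0) :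
    (∀ I : Fin K → Finset (Fin n), (∀ i, I i ⊆ X) →
        (∀ i j, i ≠ j → Disjoint (I i) (I j)) → Finset.univ.biUnion I = X →
        (∀ i, (I i).card = m i) →
        0 < ∑ i, Module.finrank ℝ ↥(sparseSubspace n (I i)ᶜ ⊓ B i)) ↔
      ∃ J ⊆ X, J.card < ∑ i, Module.finrank ℝ ↥(sparseSubspace n (J ∪ Xᶜ) ⊓ B i) := by
  classical
  set g : Fin K → Finset (Fin n) → ℕ :=
    fun i A => Module.finrank ℝ ↥(sparseSubspace n Aᶜ ⊓ B i) with hg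
  set r : Fin K → Finset (Fin n) → ℕ := fun i A => m i - g i A with hr
  have hgle : ∀ i A, g i A ≤ m i := fun i A => (hdim i) ▸ Stmt10Aux.gdim_le (B i) A
  have h0 : ∀ i, r i ∅ = 0 := by
    intro i
    have hge : g i ∅ = m i := (hdim i) ▸ Stmt10Aux.gdim_empty (B i)
    simp [hr, hge]
  have h1 : ∀ i x A, r i (insert x A) ≤ r i A + 1 := by
    intro i x A
    have := Stmt10Aux.gdim_insert (B i) x A
    have h1' : g i A ≤ g i (insert x A) + 1 := this
    have := hgle i A
    have := hgle i (insert x A)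
    simp only [hr]
    omega
  have hmono : ∀ i A A', A ⊆ A' → r i A ≤ r i A' := by
    intro i A A' hAA
    have : g i A' ≤ g i A := Stmt10Aux.gdim_anti (B i) hAA
    have := hgle i A
    simp only [hr]
    omega
  have hsubm : ∀ i A A', r i (A ∪ A') + r i (A ∩ A') ≤ r i A + r i A' := by
    intro i A A'
    have : g i A + g i A' ≤ g i (A ∪ A') + g i (A ∩ A') :=
      Stmt10Aux.gdim_supermod (B i) A A'
    have := hgle i A
    have := hgle i A'
    have := hgle i (A ∪ A')
    have := hgle i (A ∩ A')
    simp only [hr]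
    omega
  have hrX : ∀ i, r i X = m i := by
    intro i
    have hz : g i X = 0 := htriv i
    simp [hr, hz]
  constructor
  · -- (a) → (b), by contraposition
    intro hLHS
    by_contra hb
    push_neg at hb
    have hall : ∀ A ⊆ X, A.card ≤ ∑ i, r i A := by
      intro A hA
      have hJ := hb (X \ A) (Finset.sdiff_subset)
      have hset : (X \ A) ∪ Xᶜ = Aᶜ := by
        ext j
        have hj := @hA j
        simp only [Finset.mem_union, Finset.mem_sdiff, Finset.mem_compl]
        tauto
      rw [hset] at hJ
      have hJg : ∑ i, g i A ≤ X.card - A.card := by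
        rw [← Finset.card_sdiff_of_subset hA]
        exact hJ
      have hsum2 : ∑ i, (g i A + r i A) = X.card := by
        rw [← hsum]
        apply Finset.sum_congr rfl
        intro i _
        have := hgle i A
        simp only [hr]
        omega
      rw [Finset.sum_add_distrib] at hsum2
      have hAX : A.card ≤ X.card := Finset.card_le_card hA
      omega
    obtain ⟨I, hIX, hdisj, hbi, hrank⟩ :=
      Stmt10Aux.partition_lemma K X.card X rfl r h0 h1 hmono hsubm hall
    have hle : ∀ i, (I i).card ≤ m i := by
      intro i
      rw [← hrank i, ← hrX i]
      exact hmono i _ X (hIX i)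
    have hsumI : ∑ i, (I i).card = X.card := by
      rw [← hbi]
      exact (Finset.card_biUnion (fun i _ j _ hij => hdisj i j hij)).symm
    have hcards : ∀ i, (I i).card = m i := by
      by_contra hc
      push_neg at hc
      obtain ⟨i₀, hi₀⟩ := hc
      have hlt : ∑ i, (I i).card < ∑ i, m i :=
        Finset.sum_lt_sum (fun i _ => hle i)
          ⟨i₀, Finset.mem_univ i₀, lt_of_le_of_ne (hle i₀) hi₀⟩
      omega
    have hz : ∀ i, g i (I i) = 0 := by
      intro i
      have h1' := hrank i
      have h2' := hcards i
      have := hgle i (I i)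
      simp only [hr] at h1'
      omega
    have hzero : ∑ i, Module.finrank ℝ ↥(sparseSubspace n (I i)ᶜ ⊓ B i) = 0 :=
      Finset.sum_eq_zero (fun i _ => hz i)
    have hpos := hLHS I hIX hdisj hbi hcards
    omega
  · -- (b) → (a)
    rintro ⟨J, hJX, hJlt⟩ I hIX hdisj hbi hcards
    by_contra hpos
    push_neg at hpos
    have hz : ∀ i, g i (I i) = 0 := by
      intro i
      have : ∑ i, Module.finrank ℝ ↥(sparseSubspace n (I i)ᶜ ⊓ B i) = 0 := by omega
      exact (Finset.sum_eq_zero_iff.mp this) i (Finset.mem_univ i)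
    have hrI : ∀ i, r i (I i) = m i := by
      intro i
      have := hz i
      simp only [hr]
      omega
    have hkey : ∀ i, g i (X \ J) ≤ (I i ∩ J).card := by
      intro i
      have hsplit : (I i \ J) ∪ (I i ∩ J) = I i := Finset.sdiff_union_inter (I i) J
      have hub := Stmt10Aux.r_union_le (r i) (h1 i) (I i ∩ J) (I i \ J)
      rw [hsplit] at hub
      have hmm : r i (I i \ J) ≤ r i (X \ J) :=
        hmono i _ _ (Finset.sdiff_subset_sdiff (hIX i) (subset_refl J))
      have h1' := hrI i
      have := hgle i (X \ J)
      have hgr : g i (X \ J) = m i - r i (X \ J) := by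
        have := hgle i (X \ J)
        simp only [hr]
        omega
      have hrle : r i (X \ J) ≤ m i := by simp only [hr]; omega
      omega
    have hset : J ∪ Xᶜ = (X \ J)ᶜ := by
      ext j
      simp only [Finset.mem_union, Finset.mem_sdiff, Finset.mem_compl]
      tauto
    have hsumg : ∑ i, Module.finrank ℝ ↥(sparseSubspace n (J ∪ Xᶜ) ⊓ B i)
        = ∑ i, g i (X \ J) := by
      apply Finset.sum_congr rfl
      intro i _
      rw [hset]
    have hcardJ : ∑ i, (I i ∩ J).card = J.card := by
      have hdisj' : ∀ i ∈ Finset.univ, ∀ j ∈ Finset.univ, i ≠ j →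
          Disjoint (I i ∩ J) (I j ∩ J) := fun i _ j _ hij =>
        Finset.disjoint_of_subset_left Finset.inter_subset_left
          (Finset.disjoint_of_subset_right Finset.inter_subset_left (hdisj i j hij))
      rw [← Finset.card_biUnion hdisj']
      congr 1
      ext a
      simp only [Finset.mem_biUnion, Finset.mem_univ, true_and, Finset.mem_inter]
      constructor
      · rintro ⟨i, _, ha⟩
        exact ha
      · intro ha
        have : a ∈ Finset.univ.biUnion I := hbi ▸ hJX ha
        obtain ⟨i, _, hi⟩ := Finset.mem_biUnion.mp this
        exact ⟨i, hi, ha⟩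
    have hchain : ∑ i, g i (X \ J) ≤ J.card := by
      rw [← hcardJ]
      exact Finset.sum_le_sum (fun i _ => hkey i)
    rw [hsumg] at hJlt
    omega
end
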